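/- If n > 50400 is a highly composite number with largest prime factor p_r, and d(n) = 2^{β_1} q_2^{β_2} ⋯ q_s^{β_s} is the prime factorization of d(n), then β_1 ≥ π(p_r + 1) − π((p_r+1)/2), where π is the prime counting function. -/

import Mathlib

/-- `d n`: number of positive divisors of `n`. -/
def d (n : ℕ) : ℕ := (Nat.divisors n).card

/-- A positive integer `n` is highly composite if every smaller positive
integer has strictly fewer divisors. -/
def HighlyComposite (n : ℕ) : Prop :=
  0 < n ∧ ∀ m : ℕ, 0 < m → m < n → d m < d n


lemma d_mul {a b : ℕ} (h : Nat.Coprime a b) : d (a*b) = d a * d b :=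
  Nat.Coprime.card_divisors_mul h

lemma d_pp {p : ℕ} (hp : p.Prime) (k : ℕ) : d (p^k) = k + 1 := by
  unfold d; rw [Nat.divisors_prime_pow hp]; simp

lemma d_pos {a : ℕ} (ha : a ≠ 0) : 0 < d a := by
  unfold d
  rw [Finset.card_pos]
  exact ⟨1, Nat.one_mem_divisors.mpr ha⟩

lemma coprime_of_prime_dvd {a b : ℕ} (h : ∀ r, r.Prime → r ∣ a → ¬ r ∣ b) : Nat.Coprime a b := by
  by_contra hg
  have h2 : 2 ≤ Nat.gcd a b := by
    rcases Nat.eq_zero_or_pos (Nat.gcd a b) with h0 | h1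
    · have ha := Nat.eq_zero_of_gcd_eq_zero_left h0
      have hb := Nat.eq_zero_of_gcd_eq_zero_right h0
      subst ha; subst hb
      exact absurd (dvd_zero 2) (h 2 Nat.prime_two (dvd_zero 2))
    · omega
  set r := (Nat.gcd a b).minFac with hr
  have hrp : r.Prime := Nat.minFac_prime (by omega)
  have hrd : r ∣ Nat.gcd a b := Nat.minFac_dvd _
  exact h r hrp (hrd.trans (Nat.gcd_dvd_left a b)) (hrd.trans (Nat.gcd_dvd_right a b))

/-- extraction of the full prime-power part for a finite set of primes -/
lemma extract {n : ℕ} (hn : n ≠ 0) (s : Finset ℕ) (hs : ∀ p ∈ s, p.Prime) :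
    ∃ c, n = (∏ p ∈ s, p ^ n.factorization p) * c ∧ c ≠ 0 ∧
      ∀ r, r.Prime → r ∣ c → r ∣ n ∧ r ∉ s := by
  classical
  induction s using Finset.induction generalizing n with
  | empty => exact ⟨n, by simp, hn, fun r hr hrd => ⟨hrd, by simp⟩⟩
  | @insert p s hps ih =>
    have hp : p.Prime := hs p (Finset.mem_insert_self p s)
    set c0 := n / p ^ n.factorization p with hc0
    have hsplit : p ^ n.factorization p * c0 = n := Nat.ordProj_mul_ordCompl_eq_self n p
    have hc00 : c0 ≠ 0 := Nat.ordCompl_pos p hn |>.ne'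
    have hfac : ∀ q, q ≠ p → c0.factorization q = n.factorization q := by
      intro q hq
      rw [hc0, Nat.factorization_ordCompl n p]; simp [Finsupp.erase_ne hq]
    obtain ⟨c, hceq, hc0', hcr⟩ := ih hc00 (fun q hq => hs q (Finset.mem_insert_of_mem hq))
    refine ⟨c, ?_, hc0', ?_⟩
    · rw [Finset.prod_insert hps, mul_assoc]
      have : ∏ q ∈ s, q ^ n.factorization q = ∏ q ∈ s, q ^ c0.factorization q := by
        apply Finset.prod_congr rfl
        intro q hq
        rw [hfac q (by rintro rfl; exact hps hq)]
      rw [this, ← hceq, hsplit]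
    · intro r hr hrd
      obtain ⟨hrc0, hrs⟩ := hcr r hr hrd
      constructor
      · exact hrc0.trans (Nat.ordCompl_dvd n p)
      · intro hmem
        rcases Finset.mem_insert.mp hmem with rfl | hmem2
        · exact (Nat.not_dvd_ordCompl hp hn) hrc0
        · exact hrs hmem2

/-- The master move: if we can replace the full `s`-part `P` of `n` by a smaller
number `A` (whose prime factors are in `s` or don't divide `n`) with at least as
many divisors, then `n` is not highly composite. -/
lemma move {n : ℕ} (hc : HighlyComposite n) (s : Finset ℕ) (hs : ∀ p ∈ s, p.Prime) (A : ℕ)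
    (hAp : ∀ r, r.Prime → r ∣ A → r ∈ s ∨ ¬ r ∣ n)
    (hlt : A < ∏ p ∈ s, p ^ n.factorization p)
    (hd : d (∏ p ∈ s, p ^ n.factorization p) ≤ d A) : False := by
  have hn : n ≠ 0 := hc.1.ne'
  obtain ⟨c, hceq, hc0, hcr⟩ := extract hn s hs
  set P := ∏ p ∈ s, p ^ n.factorization p with hP
  have hP0 : P ≠ 0 := by
    intro h0; rw [h0, zero_mul] at hceq; exact hn hceq
  have hA0 : A ≠ 0 := by
    intro h0
    rw [h0] at hd
    have := d_pos hP0
    simp [d, Nat.divisors_zero] at hd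
    omega
  -- coprimality
  have hPc : Nat.Coprime P c := by
    apply coprime_of_prime_dvd
    intro r hr hrP hrc
    exact (hcr r hr hrc).2 (by
      have : r ∣ ∏ p ∈ s, p ^ n.factorization p := hrP
      obtain ⟨p, hps, hrp⟩ := Prime.exists_mem_finset_dvd hr.prime this
      have hpp := hs p hps
      have : r = p := (Nat.prime_dvd_prime_iff_eq hr hpp).mp (hr.dvd_of_dvd_pow hrp)
      rwa [this])
  have hAc : Nat.Coprime A c := by
    apply coprime_of_prime_dvd
    intro r hr hrA hrc
    rcases hAp r hr hrA with hmem | hnd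
    · exact (hcr r hr hrc).2 hmem
    · exact hnd ((hcr r hr hrc).1)
  have hmlt : A * c < n := by
    rw [hceq]
    exact (Nat.mul_lt_mul_right (Nat.pos_of_ne_zero hc0)).mpr hlt
  have hmpos : 0 < A * c := Nat.mul_pos (Nat.pos_of_ne_zero hA0) (Nat.pos_of_ne_zero hc0)
  have hdm : d n ≤ d (A * c) := by
    rw [hceq, d_mul hPc, d_mul hAc]
    exact Nat.mul_le_mul_right _ hd
  exact absurd (hc.2 (A*c) hmpos hmlt) (by omega)

lemma prod_single (f : ℕ → ℕ) (a : ℕ) : ∏ p ∈ ({a} : Finset ℕ), f p = f a := by simp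

lemma prod_pair {a b : ℕ} (f : ℕ → ℕ) (h : a ≠ b) :
    ∏ p ∈ ({a,b} : Finset ℕ), f p = f a * f b := by
  rw [Finset.prod_insert (by simp [h]), Finset.prod_singleton]

lemma prod_triple {a b c : ℕ} (f : ℕ → ℕ) (h1 : a ≠ b) (h2 : a ≠ c) (h3 : b ≠ c) :
    ∏ p ∈ ({a,b,c} : Finset ℕ), f p = f a * f b * f c := by
  rw [Finset.prod_insert (by simp [h1, h2]), Finset.prod_insert (by simp [h3]),
    Finset.prod_singleton, mul_assoc]

lemma prod_quad {a b c e : ℕ} (f : ℕ → ℕ) (h1 : a ≠ b) (h2 : a ≠ c) (h3 : a ≠ e)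
    (h4 : b ≠ c) (h5 : b ≠ e) (h6 : c ≠ e) :
    ∏ p ∈ ({a,b,c,e} : Finset ℕ), f p = f a * f b * f c * f e := by
  rw [Finset.prod_insert (by simp [h1, h2, h3]), Finset.prod_insert (by simp [h4, h5]),
    Finset.prod_insert (by simp [h6]), Finset.prod_singleton, mul_assoc, mul_assoc]

lemma d_prime {q : ℕ} (hq : q.Prime) : d q = 2 := by
  have := d_pp hq 1; rwa [pow_one] at this

lemma cop_pp {a b : ℕ} (ha : a.Prime) (hb : b.Prime) (hne : a ≠ b) (k l : ℕ) :
    Nat.Coprime (a^k) (b^l) :=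
  Nat.Coprime.pow _ _ ((Nat.coprime_primes ha hb).mpr hne)

lemma pdvd1 {r x : ℕ} (hr : r.Prime) (hx : x.Prime) (k : ℕ) (h : r ∣ x^k) : r = x :=
  (Nat.prime_dvd_prime_iff_eq hr hx).mp (hr.dvd_of_dvd_pow h)

lemma pdvd2 {r x y k l : ℕ} (hr : r.Prime) (hx : x.Prime) (hy : y.Prime)
    (h : r ∣ x^k * y^l) : r = x ∨ r = y := by
  rcases (Nat.Prime.dvd_mul hr).mp h with h' | h'
  · exact Or.inl (pdvd1 hr hx _ h')
  · exact Or.inr (pdvd1 hr hy _ h')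

lemma pdvd3 {r x y z k l m : ℕ} (hr : r.Prime) (hx : x.Prime) (hy : y.Prime) (hz : z.Prime)
    (h : r ∣ x^k * y^l * z^m) : r = x ∨ r = y ∨ r = z := by
  rcases (Nat.Prime.dvd_mul hr).mp h with h' | h'
  · rcases pdvd2 hr hx hy h' with h'' | h''
    · exact Or.inl h''
    · exact Or.inr (Or.inl h'')
  · exact Or.inr (Or.inr (pdvd1 hr hz _ h'))

lemma ne_of_dvd_not_dvd {a b n : ℕ} (ha : a ∣ n) (hb : ¬ b ∣ n) : b ≠ a := by
  rintro rfl; exact hb ha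

/-- every prime up to `pr` divides a highly composite `n` -/
lemma primes_dvd {n pr : ℕ} (hc : HighlyComposite n) (hpr : pr.Prime) (hprdvd : pr ∣ n)
    (q : ℕ) (hq : q.Prime) (hle : q ≤ pr) : q ∣ n := by
  by_contra hqn
  have hn0 : n ≠ 0 := hc.1.ne'
  have hqne : q ≠ pr := fun h => hqn (h ▸ hprdvd)
  have hqlt : q < pr := lt_of_le_of_ne hle hqne
  set w := n.factorization pr with hw
  have hw1 : 1 ≤ w := hpr.factorization_pos_of_dvd hn0 hprdvd
  apply move hc {pr} (by simpa using hpr) (pr^(w-1) * q^1)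
  · intro r hr hrd
    rcases pdvd2 hr hpr hq hrd with rfl | rfl
    · left; exact Finset.mem_singleton_self r
    · right; exact hqn
  · rw [prod_single, ← hw]
    have hsplit : pr^w = pr^(w-1) * pr^1 := by rw [← pow_add]; congr 1; omega
    rw [hsplit]
    exact (Nat.mul_lt_mul_left (pow_pos hpr.pos _)).mpr (by simpa using hqlt)
  · rw [prod_single, ← hw, d_mul (cop_pp hpr hq hqne.symm _ _), d_pp hpr, d_pp hpr, d_pp hq]
    omega

/-- exponents in a highly composite number are nonincreasing -/
lemma mono_exp {n p1 p2 : ℕ} (hc : HighlyComposite n) (h1 : p1.Prime) (h2 : p2.Prime)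
    (hlt : p1 < p2) : n.factorization p2 ≤ n.factorization p1 := by
  by_contra hcon
  set v1 := n.factorization p1 with hv1
  set v2 := n.factorization p2 with hv2
  have hne : p1 ≠ p2 := hlt.ne
  have hsprime : ∀ p ∈ ({p1,p2} : Finset ℕ), p.Prime := by
    intro p hp
    rcases Finset.mem_insert.mp hp with rfl | hp
    · exact h1
    · rw [Finset.mem_singleton.mp hp]; exact h2
  apply move hc {p1, p2} hsprime (p1^v2 * p2^v1)
  · intro r hr hrd
    rcases pdvd2 hr h1 h2 hrd with rfl | rfl
    · left; simp
    · left; simp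
  · rw [prod_pair _ hne, ← hv1, ← hv2]
    have hk : v2 = v1 + (v2 - v1) := by omega
    rw [hk, pow_add, pow_add]
    have hpow : p1 ^ (v2 - v1) < p2 ^ (v2 - v1) :=
      Nat.pow_lt_pow_left hlt (by omega)
    calc p1^v1 * p1^(v2-v1) * p2^v1 = p1^v1 * p2^v1 * p1^(v2-v1) := by ring
      _ < p1^v1 * p2^v1 * p2^(v2-v1) :=
          (Nat.mul_lt_mul_left (Nat.mul_pos (pow_pos h1.pos _) (pow_pos h2.pos _))).mpr hpow
      _ = p1^v1 * (p2^v1 * p2^(v2-v1)) := by ring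
  · rw [prod_pair _ hne, ← hv1, ← hv2, d_mul (cop_pp h1 h2 hne _ _),
      d_mul (cop_pp h1 h2 hne _ _), d_pp h1, d_pp h1, d_pp h2, d_pp h2]
    exact le_of_eq (by ring)

/-- kill: exponent of q at least 3 -/
lemma K1 {n q p : ℕ} (hc : HighlyComposite n) (hq : q.Prime) (hp : p.Prime)
    (hpn : ¬ p ∣ n) (hqd : q ∣ n) (ha : 3 ≤ n.factorization q) (hplt : p < q^2) : False := by
  set a := n.factorization q with hva
  have hpq : p ≠ q := ne_of_dvd_not_dvd hqd hpn
  apply move hc {q} (by simpa using hq) (q^(a-2) * p^1)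
  · intro r hr hrd
    rcases pdvd2 hr hq hp hrd with rfl | rfl
    · left; exact Finset.mem_singleton_self r
    · right; exact hpn
  · rw [prod_single, ← hva]
    have hsplit : q^a = q^(a-2) * q^2 := by rw [← pow_add]; congr 1; omega
    rw [hsplit, pow_one]
    exact (Nat.mul_lt_mul_left (pow_pos hq.pos _)).mpr hplt
  · rw [prod_single, ← hva, d_mul (cop_pp hq hp hpq.symm _ _), d_pp hq, d_pp hq, d_pp hp]
    omega

/-- kill: q has exponent 2 and some other prime r has exponent ≥ 3, with q*r > p -/
lemma K2 {n q r p : ℕ} (hc : HighlyComposite n) (hq : q.Prime) (hr : r.Prime) (hp : p.Prime)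
    (hqr : q ≠ r) (hpn : ¬ p ∣ n) (hqd : q ∣ n) (hrd : r ∣ n)
    (hvq : n.factorization q = 2) (hvr : 3 ≤ n.factorization r) (hplt : p < q*r) : False := by
  set c := n.factorization r with hvc
  have hpq : p ≠ q := ne_of_dvd_not_dvd hqd hpn
  have hpr' : p ≠ r := ne_of_dvd_not_dvd hrd hpn
  have hsprime : ∀ x ∈ ({q, r} : Finset ℕ), x.Prime := by
    intro x hx
    rcases Finset.mem_insert.mp hx with rfl | hx
    · exact hq
    · rw [Finset.mem_singleton.mp hx]; exact hr
  apply move hc {q, r} hsprime (q^1 * r^(c-1) * p^1)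
  · intro x hx hxd
    rcases pdvd3 hx hq hr hp hxd with rfl | rfl | rfl
    · left; simp
    · left; simp
    · right; exact hpn
  · rw [prod_pair _ hqr, ← hvc, hvq]
    have hsplit : r^c = r^(c-1) * r^1 := by rw [← pow_add]; congr 1; omega
    rw [hsplit]
    calc q^1 * r^(c-1) * p^1 = q * r^(c-1) * p := by ring
      _ < q * r^(c-1) * (q*r) :=
          (Nat.mul_lt_mul_left (Nat.mul_pos hq.pos (pow_pos hr.pos _))).mpr hplt
      _ = q^2 * (r^(c-1) * r^1) := by ring
  · rw [prod_pair _ hqr, ← hvc, hvq,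
      d_mul (Nat.Coprime.mul (cop_pp hq hp hpq.symm 1 1) (cop_pp hr hp hpr'.symm (c-1) 1)),
      d_mul (cop_pp hq hr hqr 1 (c-1)), d_mul (cop_pp hq hr hqr 2 c)]
    simp only [d_pp hq, d_pp hr, d_pp hp]
    omega

/-- kill: q has exponent 2 and base prime b has exponent ≥ 7 -/
lemma K3 {n b q p : ℕ} (hc : HighlyComposite n) (hb : b.Prime) (hq : q.Prime) (hp : p.Prime)
    (hbq : b ≠ q) (hpn : ¬ p ∣ n) (hbd : b ∣ n) (hqd : q ∣ n)
    (hvq : n.factorization q = 2) (hvb : 7 ≤ n.factorization b) (hplt : p < b^2*q) : False := by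
  set w := n.factorization b with hvw
  have hpq : p ≠ q := ne_of_dvd_not_dvd hqd hpn
  have hpb : p ≠ b := ne_of_dvd_not_dvd hbd hpn
  have hsprime : ∀ x ∈ ({b, q} : Finset ℕ), x.Prime := by
    intro x hx
    rcases Finset.mem_insert.mp hx with rfl | hx
    · exact hb
    · rw [Finset.mem_singleton.mp hx]; exact hq
  apply move hc {b, q} hsprime (b^(w-2) * q^1 * p^1)
  · intro x hx hxd
    rcases pdvd3 hx hb hq hp hxd with rfl | rfl | rfl
    · left; simp
    · left; simp
    · right; exact hpn
  · rw [prod_pair _ hbq, ← hvw, hvq]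
    have hsplit : b^w = b^(w-2) * b^2 := by rw [← pow_add]; congr 1; omega
    rw [hsplit]
    calc b^(w-2) * q^1 * p^1 = b^(w-2) * q * p := by ring
      _ < b^(w-2) * q * (b^2*q) :=
          (Nat.mul_lt_mul_left (Nat.mul_pos (pow_pos hb.pos _) hq.pos)).mpr hplt
      _ = b^(w-2) * b^2 * q^2 := by ring
  · rw [prod_pair _ hbq, ← hvw, hvq,
      d_mul (Nat.Coprime.mul (cop_pp hb hp hpb.symm (w-2) 1) (cop_pp hq hp hpq.symm 1 1)),
      d_mul (cop_pp hb hq hbq (w-2) 1), d_mul (cop_pp hb hq hbq w 2)]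
    simp only [d_pp hb, d_pp hq, d_pp hp]
    omega

/-- kill: q has exponent 2, multiply by b^t and divide by q -/
lemma K5 {n b q : ℕ} (hc : HighlyComposite n) (hb : b.Prime) (hq : q.Prime)
    (hbq : b ≠ q) (hbd : b ∣ n) (hqd : q ∣ n)
    (hvq : n.factorization q = 2) (t : ℕ) (hsz : b^t < q)
    (ht : n.factorization b + 1 ≤ 2*t) : False := by
  set w := n.factorization b with hvw
  have hsprime : ∀ x ∈ ({b, q} : Finset ℕ), x.Prime := by
    intro x hx
    rcases Finset.mem_insert.mp hx with rfl | hx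
    · exact hb
    · rw [Finset.mem_singleton.mp hx]; exact hq
  apply move hc {b, q} hsprime (b^(w+t) * q^1)
  · intro x hx hxd
    rcases pdvd2 hx hb hq hxd with rfl | rfl
    · left; simp
    · left; simp
  · rw [prod_pair _ hbq, ← hvw, hvq]
    calc b^(w+t) * q^1 = b^w * q * b^t := by rw [pow_add]; ring
      _ < b^w * q * q :=
          (Nat.mul_lt_mul_left (Nat.mul_pos (pow_pos hb.pos _) hq.pos)).mpr hsz
      _ = b^w * q^2 := by ring
  · rw [prod_pair _ hbq, ← hvw, hvq, d_mul (cop_pp hb hq hbq (w+t) 1),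
      d_mul (cop_pp hb hq hbq w 2)]
    simp only [d_pp hb, d_pp hq]
    omega

/-- kill: q has exponent 2, multiply by 2^t * 3^s and divide by q -/
lemma K67 {n q : ℕ} (hc : HighlyComposite n) (hq : q.Prime)
    (h2d : 2 ∣ n) (h3d : 3 ∣ n) (hqd : q ∣ n) (hq2 : q ≠ 2) (hq3 : q ≠ 3)
    (hvq : n.factorization q = 2) (t s : ℕ) (hsz : 2^t*3^s < q)
    (hdd : 3*(n.factorization 2 + 1)*(n.factorization 3 + 1) ≤
      2*(n.factorization 2 + 1 + t)*(n.factorization 3 + 1 + s)) : False := by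
  set v2 := n.factorization 2 with hv2
  set v3 := n.factorization 3 with hv3
  have p2 : Nat.Prime 2 := Nat.prime_two
  have p3 : Nat.Prime 3 := Nat.prime_three
  have h23 : (2:ℕ) ≠ 3 := by norm_num
  have hsprime : ∀ x ∈ ({2, 3, q} : Finset ℕ), x.Prime := by
    intro x hx
    rcases Finset.mem_insert.mp hx with rfl | hx
    · exact p2
    rcases Finset.mem_insert.mp hx with rfl | hx
    · exact p3
    rw [Finset.mem_singleton.mp hx]; exact hq
  apply move hc {2, 3, q} hsprime (2^(v2+t) * 3^(v3+s) * q^1)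
  · intro x hx hxd
    rcases pdvd3 hx p2 p3 hq hxd with rfl | rfl | rfl
    · left; simp
    · left; simp
    · left; simp
  · rw [prod_triple _ h23 hq2.symm hq3.symm, ← hv2, ← hv3, hvq]
    calc 2^(v2+t) * 3^(v3+s) * q^1 = 2^v2 * 3^v3 * q * (2^t*3^s) := by
          rw [pow_add, pow_add]; ring
      _ < 2^v2 * 3^v3 * q * q :=
          (Nat.mul_lt_mul_left (Nat.mul_pos (Nat.mul_pos (pow_pos p2.pos _) (pow_pos p3.pos _)) hq.pos)).mpr hsz
      _ = 2^v2 * 3^v3 * q^2 := by ring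
  · rw [prod_triple _ h23 hq2.symm hq3.symm, ← hv2, ← hv3, hvq,
      d_mul (Nat.Coprime.mul (cop_pp p2 hq hq2.symm (v2+t) 1) (cop_pp p3 hq hq3.symm (v3+s) 1)),
      d_mul (cop_pp p2 p3 h23 (v2+t) (v3+s)),
      d_mul (Nat.Coprime.mul (cop_pp p2 hq hq2.symm v2 2) (cop_pp p3 hq hq3.symm v3 2)),
      d_mul (cop_pp p2 p3 h23 v2 v3)]
    simp only [d_pp p2, d_pp p3, d_pp hq]
    calc (v2+1)*(v3+1)*(2+1) = 3*(v2+1)*(v3+1) := by ring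
      _ ≤ 2*(v2+1+t)*(v3+1+s) := hdd
      _ = (v2+t+1)*(v3+s+1)*(1+1) := by ring

/-- if all prime divisors of n lie in s, then n equals its s-part -/
lemma pin {n : ℕ} (hn : n ≠ 0) (s : Finset ℕ) (hs : ∀ p ∈ s, p.Prime)
    (hall : ∀ r, r.Prime → r ∣ n → r ∈ s) :
    n = ∏ p ∈ s, p ^ n.factorization p := by
  obtain ⟨c, hceq, hc0, hcr⟩ := extract hn s hs
  have hc1 : c = 1 := by
    by_contra hne
    have h2 : 2 ≤ c := by omega
    have hmf : c.minFac.Prime := Nat.minFac_prime hne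
    have hmfd : c.minFac ∣ c := Nat.minFac_dvd c
    obtain ⟨hdn, hns⟩ := hcr c.minFac hmf hmfd
    exact hns (hall c.minFac hmf hdn)
  rw [hc1, mul_one] at hceq
  exact hceq

lemma pdvd4 {r x1 x2 x3 x4 k1 k2 k3 k4 : ℕ} (hr : r.Prime) (h1 : x1.Prime) (h2 : x2.Prime)
    (h3 : x3.Prime) (h4 : x4.Prime) (h : r ∣ x1^k1*x2^k2*x3^k3*x4^k4) :
    r = x1 ∨ r = x2 ∨ r = x3 ∨ r = x4 := by
  rcases (Nat.Prime.dvd_mul hr).mp h with h' | h'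
  · rcases pdvd3 hr h1 h2 h3 h' with h''|h''|h'' <;> tauto
  · have := pdvd1 hr h4 _ h'; tauto

lemma pdvd5 {r x1 x2 x3 x4 x5 k1 k2 k3 k4 k5 : ℕ} (hr : r.Prime) (h1 : x1.Prime) (h2 : x2.Prime)
    (h3 : x3.Prime) (h4 : x4.Prime) (h5 : x5.Prime) (h : r ∣ x1^k1*x2^k2*x3^k3*x4^k4*x5^k5) :
    r = x1 ∨ r = x2 ∨ r = x3 ∨ r = x4 ∨ r = x5 := by
  rcases (Nat.Prime.dvd_mul hr).mp h with h' | h'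
  · rcases pdvd4 hr h1 h2 h3 h4 h' with h''|h''|h''|h'' <;> tauto
  · have := pdvd1 hr h5 _ h'; tauto

lemma pdvd6 {r x1 x2 x3 x4 x5 x6 k1 k2 k3 k4 k5 k6 : ℕ} (hr : r.Prime) (h1 : x1.Prime)
    (h2 : x2.Prime) (h3 : x3.Prime) (h4 : x4.Prime) (h5 : x5.Prime) (h6 : x6.Prime)
    (h : r ∣ x1^k1*x2^k2*x3^k3*x4^k4*x5^k5*x6^k6) :
    r = x1 ∨ r = x2 ∨ r = x3 ∨ r = x4 ∨ r = x5 ∨ r = x6 := by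
  rcases (Nat.Prime.dvd_mul hr).mp h with h' | h'
  · rcases pdvd5 hr h1 h2 h3 h4 h5 h' with h''|h''|h''|h''|h'' <;> tauto
  · have := pdvd1 hr h6 _ h'; tauto

lemma d2c {x1 x2 : ℕ} (h1 : x1.Prime) (h2 : x2.Prime) (n12 : x1 ≠ x2) (a b : ℕ) :
    d (x1^a*x2^b) = (a+1)*(b+1) := by
  rw [d_mul (cop_pp h1 h2 n12 a b), d_pp h1, d_pp h2]

lemma d3c {x1 x2 x3 : ℕ} (h1 : x1.Prime) (h2 : x2.Prime) (h3 : x3.Prime)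
    (n12 : x1 ≠ x2) (n13 : x1 ≠ x3) (n23 : x2 ≠ x3) (a b c : ℕ) :
    d (x1^a*x2^b*x3^c) = (a+1)*(b+1)*(c+1) := by
  rw [d_mul ((cop_pp h1 h3 n13 a c).mul (cop_pp h2 h3 n23 b c)), d2c h1 h2 n12, d_pp h3]

lemma d4c {x1 x2 x3 x4 : ℕ} (h1 : x1.Prime) (h2 : x2.Prime) (h3 : x3.Prime) (h4 : x4.Prime)
    (n12 : x1 ≠ x2) (n13 : x1 ≠ x3) (n14 : x1 ≠ x4) (n23 : x2 ≠ x3) (n24 : x2 ≠ x4)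
    (n34 : x3 ≠ x4) (a b c e : ℕ) :
    d (x1^a*x2^b*x3^c*x4^e) = (a+1)*(b+1)*(c+1)*(e+1) := by
  rw [d_mul (((cop_pp h1 h4 n14 a e).mul (cop_pp h2 h4 n24 b e)).mul (cop_pp h3 h4 n34 c e)),
    d3c h1 h2 h3 n12 n13 n23, d_pp h4]

lemma d5c {x1 x2 x3 x4 x5 : ℕ} (h1 : x1.Prime) (h2 : x2.Prime) (h3 : x3.Prime) (h4 : x4.Prime)
    (h5 : x5.Prime) (n12 : x1 ≠ x2) (n13 : x1 ≠ x3) (n14 : x1 ≠ x4) (n15 : x1 ≠ x5)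
    (n23 : x2 ≠ x3) (n24 : x2 ≠ x4) (n25 : x2 ≠ x5) (n34 : x3 ≠ x4) (n35 : x3 ≠ x5)
    (n45 : x4 ≠ x5) (a b c e f : ℕ) :
    d (x1^a*x2^b*x3^c*x4^e*x5^f) = (a+1)*(b+1)*(c+1)*(e+1)*(f+1) := by
  rw [d_mul ((((cop_pp h1 h5 n15 a f).mul (cop_pp h2 h5 n25 b f)).mul
      (cop_pp h3 h5 n35 c f)).mul (cop_pp h4 h5 n45 e f)),
    d4c h1 h2 h3 h4 n12 n13 n14 n23 n24 n34, d_pp h5]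

lemma d6c {x1 x2 x3 x4 x5 x6 : ℕ} (h1 : x1.Prime) (h2 : x2.Prime) (h3 : x3.Prime)
    (h4 : x4.Prime) (h5 : x5.Prime) (h6 : x6.Prime)
    (n12 : x1 ≠ x2) (n13 : x1 ≠ x3) (n14 : x1 ≠ x4) (n15 : x1 ≠ x5) (n16 : x1 ≠ x6)
    (n23 : x2 ≠ x3) (n24 : x2 ≠ x4) (n25 : x2 ≠ x5) (n26 : x2 ≠ x6)
    (n34 : x3 ≠ x4) (n35 : x3 ≠ x5) (n36 : x3 ≠ x6) (n45 : x4 ≠ x5) (n46 : x4 ≠ x6)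
    (n56 : x5 ≠ x6) (a b c e f g : ℕ) :
    d (x1^a*x2^b*x3^c*x4^e*x5^f*x6^g) = (a+1)*(b+1)*(c+1)*(e+1)*(f+1)*(g+1) := by
  rw [d_mul (((((cop_pp h1 h6 n16 a g).mul (cop_pp h2 h6 n26 b g)).mul
      (cop_pp h3 h6 n36 c g)).mul (cop_pp h4 h6 n46 e g)).mul (cop_pp h5 h6 n56 f g)),
    d5c h1 h2 h3 h4 h5 n12 n13 n14 n15 n23 n24 n25 n34 n35 n45, d_pp h6]

set_option maxHeartbeats 2000000 in
lemma odd_exp {n pr : ℕ} (hc : HighlyComposite n) (hbig : 50400 < n) (hpr : pr.Prime)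
    (hprdvd : pr ∣ n) (hmax : ∀ q : ℕ, q.Prime → q ∣ n → q ≤ pr) (hpr3 : 3 ≤ pr)
    {q : ℕ} (hq : q.Prime) (hql : pr + 1 < 2*q) (hqu : q ≤ pr) :
    Odd (n.factorization q) := by
  have hn0 : n ≠ 0 := hc.1.ne'
  by_contra hodd
  rw [Nat.not_odd_iff_even] at hodd
  have p2 : Nat.Prime 2 := by norm_num
  have p3 : Nat.Prime 3 := by norm_num
  have p5 : Nat.Prime 5 := by norm_num
  have p7 : Nat.Prime 7 := by norm_num
  have p11 : Nat.Prime 11 := by norm_num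
  have p13 : Nat.Prime 13 := by norm_num
  have p23 : Nat.Prime 23 := by norm_num
  have p29 : Nat.Prime 29 := by norm_num
  have hqd : q ∣ n := primes_dvd hc hpr hprdvd q hq hqu
  have h2d : (2:ℕ) ∣ n := primes_dvd hc hpr hprdvd 2 p2 (by omega)
  have h3d : (3:ℕ) ∣ n := primes_dvd hc hpr hprdvd 3 p3 hpr3
  have hv1 : 1 ≤ n.factorization q := hq.factorization_pos_of_dvd hn0 hqd
  obtain ⟨p, hp, hppr, hp2⟩ := Nat.exists_prime_lt_and_le_two_mul pr hpr.pos.ne'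
  have hpn : ¬ p ∣ n := fun hdvd => absurd (hmax p hp hdvd) (by omega)
  have hq2le := hq.two_le
  have hq3 : 3 ≤ q := by omega
  have hvq : n.factorization q = 2 := by
    by_contra hne
    have h3le : 3 ≤ n.factorization q := by
      rcases hodd with ⟨k, hk⟩
      omega
    refine K1 hc hq hp hpn hqd h3le ?_
    rw [pow_two]
    rcases Nat.lt_or_ge q 4 with h4 | h4
    · have hq3' : q = 3 := by omega
      subst hq3'
      omega
    · have h4q : 4*q ≤ q*q := Nat.mul_le_mul_right q h4
      omega
  have hv2u : n.factorization 2 ≤ 6 := by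
    by_contra hcon
    refine K3 hc p2 hq hp (by omega) hpn h2d hqd hvq (by omega) ?_
    rw [show (2:ℕ)^2*q = 4*q from by ring]
    omega
  have hq17 : q < 17 := by
    by_contra hcon
    refine K5 hc p2 hq (by omega) h2d hqd hvq 4 ?_ (by omega)
    rw [show (2:ℕ)^4 = 16 from by norm_num]
    omega
  interval_cases q
  · -- q = 3
    have hpr4 : pr ≤ 4 := by omega
    have hpreq : pr = 3 := by
      rcases (by omega : pr = 3 ∨ pr = 4) with h | h
      · exact h
      · rw [h] at hpr; exact absurd hpr (by norm_num)
    have hall : ∀ r, r.Prime → r ∣ n → r ∈ ({2,3} : Finset ℕ) := by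
      intro r hr hrd
      have hle := hmax r hr hrd
      have h2le := hr.two_le
      rw [hpreq] at hle
      interval_cases r <;> revert hr <;> decide
    obtain ⟨a2, ha2⟩ : ∃ a, n.factorization 2 = a := ⟨_, rfl⟩
    have hpin : n = 2^a2*3^2 := by
      have hh := pin hn0 {2,3} (by decide) hall
      rwa [prod_pair _ (by norm_num), ha2, hvq] at hh
    have hv2big : 7 ≤ a2 := by
      by_contra hcon
      have hle : n ≤ 2^6*3^2 := by
        rw [hpin]
        exact Nat.mul_le_mul_right _ (Nat.pow_le_pow_right (by norm_num) (by omega))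
      norm_num at hle
      omega
    refine K3 hc p2 hq hp (by norm_num) hpn h2d hqd hvq (by omega) ?_
    rw [show (2:ℕ)^2*3 = 12 from by norm_num]
    omega
  · exact absurd hq (by norm_num)  -- q = 4
  · -- q = 5
    have hpr8 : pr ≤ 8 := by omega
    have hv3l : 2 ≤ n.factorization 3 := by
      by_contra hcon
      exact K5 hc p3 hq (by norm_num) h3d hqd hvq 1 (by norm_num) (by omega)
    have hv3u : n.factorization 3 ≤ 6 := by
      by_contra hcon
      refine K3 hc p3 hq hp (by norm_num) hpn h3d hqd hvq (by omega) ?_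
      rw [show (3:ℕ)^2*5 = 45 from by norm_num]
      omega
    have hv2l : 4 ≤ n.factorization 2 := by
      by_contra hcon
      exact K5 hc p2 hq (by norm_num) h2d hqd hvq 2 (by norm_num) (by omega)
    have hm23 : n.factorization 3 ≤ n.factorization 2 := mono_exp hc p2 p3 (by norm_num)
    obtain ⟨a2, ha2⟩ : ∃ a, n.factorization 2 = a := ⟨_, rfl⟩
    obtain ⟨a3, ha3⟩ : ∃ a, n.factorization 3 = a := ⟨_, rfl⟩
    rw [ha2] at hv2l hv2u hm23
    rw [ha3] at hv3l hv3u hm23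
    by_cases h7 : (7:ℕ) ∣ n
    · have h7le := hmax 7 (by norm_num) h7
      have hpr7 : pr = 7 := by
        rcases (by omega : pr = 7 ∨ pr = 8) with h | h
        · exact h
        · rw [h] at hpr; exact absurd hpr (by norm_num)
      have hv7l : 1 ≤ n.factorization 7 := p7.factorization_pos_of_dvd hn0 h7
      have hv7u : n.factorization 7 ≤ 2 := by
        by_contra hcon
        exact K2 hc hq p7 hp (by norm_num) hpn hqd h7 hvq (by omega) (by omega)
      obtain ⟨a7, ha7⟩ : ∃ a, n.factorization 7 = a := ⟨_, rfl⟩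
      rw [ha7] at hv7l hv7u
      have hall : ∀ r, r.Prime → r ∣ n → r ∈ ({2,3,5,7} : Finset ℕ) := by
        intro r hr hrd
        have hle := hmax r hr hrd
        have h2le := hr.two_le
        rw [hpr7] at hle
        interval_cases r <;> revert hr <;> decide
      have hpin : n = 2^a2*3^a3*5^2*7^a7 := by
        have hh := pin hn0 {2,3,5,7} (by decide) hall
        rwa [prod_quad _ (by norm_num) (by norm_num) (by norm_num) (by norm_num) (by norm_num) (by norm_num), ha2, ha3, hvq, ha7] at hh
      interval_cases a2
      · -- a2 = 4
        interval_cases a3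
        · -- a3 = 2
          interval_cases a7
          · rw [hpin] at hbig
            norm_num at hbig
          · refine move hc {2,3,5,7} (by decide) (2^4*3^3*5^1*7^1*11^1) ?_ ?_ ?_
            · intro r hr hrd
              rcases pdvd5 hr p2 p3 p5 p7 p11 hrd with rfl|rfl|rfl|rfl|rfl
              · exact Or.inl (by decide)
              · exact Or.inl (by decide)
              · exact Or.inl (by decide)
              · exact Or.inl (by decide)
              · exact Or.inr (fun hdvd => absurd (hmax 11 (by norm_num) hdvd) (by omega))
            · rw [prod_quad _ (by norm_num) (by norm_num) (by norm_num) (by norm_num) (by norm_num) (by norm_num), ha2, ha3, hvq, ha7]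
              norm_num
            · rw [prod_quad _ (by norm_num) (by norm_num) (by norm_num) (by norm_num) (by norm_num) (by norm_num), ha2, ha3, hvq, ha7, d4c p2 p3 p5 p7 (by norm_num) (by norm_num) (by norm_num) (by norm_num) (by norm_num) (by norm_num), d5c p2 p3 p5 p7 p11 (by norm_num) (by norm_num) (by norm_num) (by norm_num) (by norm_num) (by norm_num) (by norm_num) (by norm_num) (by norm_num) (by norm_num)]
              try norm_num
        · -- a3 = 3
          interval_cases a7
          · refine move hc {2,3,5,7} (by decide) (2^4*3^2*5^1*7^1*11^1) ?_ ?_ ?_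
            · intro r hr hrd
              rcases pdvd5 hr p2 p3 p5 p7 p11 hrd with rfl|rfl|rfl|rfl|rfl
              · exact Or.inl (by decide)
              · exact Or.inl (by decide)
              · exact Or.inl (by decide)
              · exact Or.inl (by decide)
              · exact Or.inr (fun hdvd => absurd (hmax 11 (by norm_num) hdvd) (by omega))
            · rw [prod_quad _ (by norm_num) (by norm_num) (by norm_num) (by norm_num) (by norm_num) (by norm_num), ha2, ha3, hvq, ha7]
              norm_num
            · rw [prod_quad _ (by norm_num) (by norm_num) (by norm_num) (by norm_num) (by norm_num) (by norm_num), ha2, ha3, hvq, ha7, d4c p2 p3 p5 p7 (by norm_num) (by norm_num) (by norm_num) (by norm_num) (by norm_num) (by norm_num), d5c p2 p3 p5 p7 p11 (by norm_num) (by norm_num) (by norm_num) (by norm_num) (by norm_num) (by norm_num) (by norm_num) (by norm_num) (by norm_num) (by norm_num)]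
              try norm_num
          · refine move hc {2,3,5,7} (by decide) (2^4*3^4*5^1*7^1*11^1) ?_ ?_ ?_
            · intro r hr hrd
              rcases pdvd5 hr p2 p3 p5 p7 p11 hrd with rfl|rfl|rfl|rfl|rfl
              · exact Or.inl (by decide)
              · exact Or.inl (by decide)
              · exact Or.inl (by decide)
              · exact Or.inl (by decide)
              · exact Or.inr (fun hdvd => absurd (hmax 11 (by norm_num) hdvd) (by omega))
            · rw [prod_quad _ (by norm_num) (by norm_num) (by norm_num) (by norm_num) (by norm_num) (by norm_num), ha2, ha3, hvq, ha7]
              norm_num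
            · rw [prod_quad _ (by norm_num) (by norm_num) (by norm_num) (by norm_num) (by norm_num) (by norm_num), ha2, ha3, hvq, ha7, d4c p2 p3 p5 p7 (by norm_num) (by norm_num) (by norm_num) (by norm_num) (by norm_num) (by norm_num), d5c p2 p3 p5 p7 p11 (by norm_num) (by norm_num) (by norm_num) (by norm_num) (by norm_num) (by norm_num) (by norm_num) (by norm_num) (by norm_num) (by norm_num)]
              try norm_num
        · -- a3 = 4
          interval_cases a7
          · refine move hc {2,3,5,7} (by decide) (2^6*3^2*5^1*7^1*11^1) ?_ ?_ ?_
            · intro r hr hrd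
              rcases pdvd5 hr p2 p3 p5 p7 p11 hrd with rfl|rfl|rfl|rfl|rfl
              · exact Or.inl (by decide)
              · exact Or.inl (by decide)
              · exact Or.inl (by decide)
              · exact Or.inl (by decide)
              · exact Or.inr (fun hdvd => absurd (hmax 11 (by norm_num) hdvd) (by omega))
            · rw [prod_quad _ (by norm_num) (by norm_num) (by norm_num) (by norm_num) (by norm_num) (by norm_num), ha2, ha3, hvq, ha7]
              norm_num
            · rw [prod_quad _ (by norm_num) (by norm_num) (by norm_num) (by norm_num) (by norm_num) (by norm_num), ha2, ha3, hvq, ha7, d4c p2 p3 p5 p7 (by norm_num) (by norm_num) (by norm_num) (by norm_num) (by norm_num) (by norm_num), d5c p2 p3 p5 p7 p11 (by norm_num) (by norm_num) (by norm_num) (by norm_num) (by norm_num) (by norm_num) (by norm_num) (by norm_num) (by norm_num) (by norm_num)]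
              try norm_num
          · refine move hc {2,3,5,7} (by decide) (2^5*3^2*5^1*7^1*11^1*13^1) ?_ ?_ ?_
            · intro r hr hrd
              rcases pdvd6 hr p2 p3 p5 p7 p11 p13 hrd with rfl|rfl|rfl|rfl|rfl|rfl
              · exact Or.inl (by decide)
              · exact Or.inl (by decide)
              · exact Or.inl (by decide)
              · exact Or.inl (by decide)
              · exact Or.inr (fun hdvd => absurd (hmax 11 (by norm_num) hdvd) (by omega))
              · exact Or.inr (fun hdvd => absurd (hmax 13 (by norm_num) hdvd) (by omega))
            · rw [prod_quad _ (by norm_num) (by norm_num) (by norm_num) (by norm_num) (by norm_num) (by norm_num), ha2, ha3, hvq, ha7]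
              norm_num
            · rw [prod_quad _ (by norm_num) (by norm_num) (by norm_num) (by norm_num) (by norm_num) (by norm_num), ha2, ha3, hvq, ha7, d4c p2 p3 p5 p7 (by norm_num) (by norm_num) (by norm_num) (by norm_num) (by norm_num) (by norm_num), d6c p2 p3 p5 p7 p11 p13 (by norm_num) (by norm_num) (by norm_num) (by norm_num) (by norm_num) (by norm_num) (by norm_num) (by norm_num) (by norm_num) (by norm_num) (by norm_num) (by norm_num) (by norm_num) (by norm_num) (by norm_num)]
              try norm_num
      · -- a2 = 5
        interval_cases a3
        · -- a3 = 2
          interval_cases a7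
          · rw [hpin] at hbig
            norm_num at hbig
          · refine move hc {2,3,5,7} (by decide) (2^5*3^3*5^1*7^1*11^1) ?_ ?_ ?_
            · intro r hr hrd
              rcases pdvd5 hr p2 p3 p5 p7 p11 hrd with rfl|rfl|rfl|rfl|rfl
              · exact Or.inl (by decide)
              · exact Or.inl (by decide)
              · exact Or.inl (by decide)
              · exact Or.inl (by decide)
              · exact Or.inr (fun hdvd => absurd (hmax 11 (by norm_num) hdvd) (by omega))
            · rw [prod_quad _ (by norm_num) (by norm_num) (by norm_num) (by norm_num) (by norm_num) (by norm_num), ha2, ha3, hvq, ha7]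
              norm_num
            · rw [prod_quad _ (by norm_num) (by norm_num) (by norm_num) (by norm_num) (by norm_num) (by norm_num), ha2, ha3, hvq, ha7, d4c p2 p3 p5 p7 (by norm_num) (by norm_num) (by norm_num) (by norm_num) (by norm_num) (by norm_num), d5c p2 p3 p5 p7 p11 (by norm_num) (by norm_num) (by norm_num) (by norm_num) (by norm_num) (by norm_num) (by norm_num) (by norm_num) (by norm_num) (by norm_num)]
              try norm_num
        · -- a3 = 3
          interval_cases a7
          · refine move hc {2,3,5,7} (by decide) (2^5*3^2*5^1*7^1*11^1) ?_ ?_ ?_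
            · intro r hr hrd
              rcases pdvd5 hr p2 p3 p5 p7 p11 hrd with rfl|rfl|rfl|rfl|rfl
              · exact Or.inl (by decide)
              · exact Or.inl (by decide)
              · exact Or.inl (by decide)
              · exact Or.inl (by decide)
              · exact Or.inr (fun hdvd => absurd (hmax 11 (by norm_num) hdvd) (by omega))
            · rw [prod_quad _ (by norm_num) (by norm_num) (by norm_num) (by norm_num) (by norm_num) (by norm_num), ha2, ha3, hvq, ha7]
              norm_num
            · rw [prod_quad _ (by norm_num) (by norm_num) (by norm_num) (by norm_num) (by norm_num) (by norm_num), ha2, ha3, hvq, ha7, d4c p2 p3 p5 p7 (by norm_num) (by norm_num) (by norm_num) (by norm_num) (by norm_num) (by norm_num), d5c p2 p3 p5 p7 p11 (by norm_num) (by norm_num) (by norm_num) (by norm_num) (by norm_num) (by norm_num) (by norm_num) (by norm_num) (by norm_num) (by norm_num)]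
              try norm_num
          · refine move hc {2,3,5,7} (by decide) (2^4*3^2*5^1*7^1*11^1*13^1) ?_ ?_ ?_
            · intro r hr hrd
              rcases pdvd6 hr p2 p3 p5 p7 p11 p13 hrd with rfl|rfl|rfl|rfl|rfl|rfl
              · exact Or.inl (by decide)
              · exact Or.inl (by decide)
              · exact Or.inl (by decide)
              · exact Or.inl (by decide)
              · exact Or.inr (fun hdvd => absurd (hmax 11 (by norm_num) hdvd) (by omega))
              · exact Or.inr (fun hdvd => absurd (hmax 13 (by norm_num) hdvd) (by omega))
            · rw [prod_quad _ (by norm_num) (by norm_num) (by norm_num) (by norm_num) (by norm_num) (by norm_num), ha2, ha3, hvq, ha7]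
              norm_num
            · rw [prod_quad _ (by norm_num) (by norm_num) (by norm_num) (by norm_num) (by norm_num) (by norm_num), ha2, ha3, hvq, ha7, d4c p2 p3 p5 p7 (by norm_num) (by norm_num) (by norm_num) (by norm_num) (by norm_num) (by norm_num), d6c p2 p3 p5 p7 p11 p13 (by norm_num) (by norm_num) (by norm_num) (by norm_num) (by norm_num) (by norm_num) (by norm_num) (by norm_num) (by norm_num) (by norm_num) (by norm_num) (by norm_num) (by norm_num) (by norm_num) (by norm_num)]
              try norm_num
        · -- a3 = 4
          interval_cases a7
          · refine move hc {2,3,5,7} (by decide) (2^5*3^3*5^1*7^1*11^1) ?_ ?_ ?_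
            · intro r hr hrd
              rcases pdvd5 hr p2 p3 p5 p7 p11 hrd with rfl|rfl|rfl|rfl|rfl
              · exact Or.inl (by decide)
              · exact Or.inl (by decide)
              · exact Or.inl (by decide)
              · exact Or.inl (by decide)
              · exact Or.inr (fun hdvd => absurd (hmax 11 (by norm_num) hdvd) (by omega))
            · rw [prod_quad _ (by norm_num) (by norm_num) (by norm_num) (by norm_num) (by norm_num) (by norm_num), ha2, ha3, hvq, ha7]
              norm_num
            · rw [prod_quad _ (by norm_num) (by norm_num) (by norm_num) (by norm_num) (by norm_num) (by norm_num), ha2, ha3, hvq, ha7, d4c p2 p3 p5 p7 (by norm_num) (by norm_num) (by norm_num) (by norm_num) (by norm_num) (by norm_num), d5c p2 p3 p5 p7 p11 (by norm_num) (by norm_num) (by norm_num) (by norm_num) (by norm_num) (by norm_num) (by norm_num) (by norm_num) (by norm_num) (by norm_num)]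
              try norm_num
          · refine move hc {2,3,5,7} (by decide) (2^6*3^2*5^1*7^1*11^1*13^1) ?_ ?_ ?_
            · intro r hr hrd
              rcases pdvd6 hr p2 p3 p5 p7 p11 p13 hrd with rfl|rfl|rfl|rfl|rfl|rfl
              · exact Or.inl (by decide)
              · exact Or.inl (by decide)
              · exact Or.inl (by decide)
              · exact Or.inl (by decide)
              · exact Or.inr (fun hdvd => absurd (hmax 11 (by norm_num) hdvd) (by omega))
              · exact Or.inr (fun hdvd => absurd (hmax 13 (by norm_num) hdvd) (by omega))
            · rw [prod_quad _ (by norm_num) (by norm_num) (by norm_num) (by norm_num) (by norm_num) (by norm_num), ha2, ha3, hvq, ha7]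
              norm_num
            · rw [prod_quad _ (by norm_num) (by norm_num) (by norm_num) (by norm_num) (by norm_num) (by norm_num), ha2, ha3, hvq, ha7, d4c p2 p3 p5 p7 (by norm_num) (by norm_num) (by norm_num) (by norm_num) (by norm_num) (by norm_num), d6c p2 p3 p5 p7 p11 p13 (by norm_num) (by norm_num) (by norm_num) (by norm_num) (by norm_num) (by norm_num) (by norm_num) (by norm_num) (by norm_num) (by norm_num) (by norm_num) (by norm_num) (by norm_num) (by norm_num) (by norm_num)]
              try norm_num
        · -- a3 = 5
          interval_cases a7
          · refine move hc {2,3,5,7} (by decide) (2^3*3^3*5^1*7^1*11^1*13^1) ?_ ?_ ?_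
            · intro r hr hrd
              rcases pdvd6 hr p2 p3 p5 p7 p11 p13 hrd with rfl|rfl|rfl|rfl|rfl|rfl
              · exact Or.inl (by decide)
              · exact Or.inl (by decide)
              · exact Or.inl (by decide)
              · exact Or.inl (by decide)
              · exact Or.inr (fun hdvd => absurd (hmax 11 (by norm_num) hdvd) (by omega))
              · exact Or.inr (fun hdvd => absurd (hmax 13 (by norm_num) hdvd) (by omega))
            · rw [prod_quad _ (by norm_num) (by norm_num) (by norm_num) (by norm_num) (by norm_num) (by norm_num), ha2, ha3, hvq, ha7]
              norm_num
            · rw [prod_quad _ (by norm_num) (by norm_num) (by norm_num) (by norm_num) (by norm_num) (by norm_num), ha2, ha3, hvq, ha7, d4c p2 p3 p5 p7 (by norm_num) (by norm_num) (by norm_num) (by norm_num) (by norm_num) (by norm_num), d6c p2 p3 p5 p7 p11 p13 (by norm_num) (by norm_num) (by norm_num) (by norm_num) (by norm_num) (by norm_num) (by norm_num) (by norm_num) (by norm_num) (by norm_num) (by norm_num) (by norm_num) (by norm_num) (by norm_num) (by norm_num)]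
              try norm_num
          · refine move hc {2,3,5,7} (by decide) (2^6*3^3*5^1*7^1*11^1*13^1) ?_ ?_ ?_
            · intro r hr hrd
              rcases pdvd6 hr p2 p3 p5 p7 p11 p13 hrd with rfl|rfl|rfl|rfl|rfl|rfl
              · exact Or.inl (by decide)
              · exact Or.inl (by decide)
              · exact Or.inl (by decide)
              · exact Or.inl (by decide)
              · exact Or.inr (fun hdvd => absurd (hmax 11 (by norm_num) hdvd) (by omega))
              · exact Or.inr (fun hdvd => absurd (hmax 13 (by norm_num) hdvd) (by omega))
            · rw [prod_quad _ (by norm_num) (by norm_num) (by norm_num) (by norm_num) (by norm_num) (by norm_num), ha2, ha3, hvq, ha7]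
              norm_num
            · rw [prod_quad _ (by norm_num) (by norm_num) (by norm_num) (by norm_num) (by norm_num) (by norm_num), ha2, ha3, hvq, ha7, d4c p2 p3 p5 p7 (by norm_num) (by norm_num) (by norm_num) (by norm_num) (by norm_num) (by norm_num), d6c p2 p3 p5 p7 p11 p13 (by norm_num) (by norm_num) (by norm_num) (by norm_num) (by norm_num) (by norm_num) (by norm_num) (by norm_num) (by norm_num) (by norm_num) (by norm_num) (by norm_num) (by norm_num) (by norm_num) (by norm_num)]
              try norm_num
      · -- a2 = 6
        interval_cases a3
        · -- a3 = 2
          interval_cases a7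
          · refine move hc {2,3,5,7} (by decide) (2^3*3^3*5^1*7^1*11^1) ?_ ?_ ?_
            · intro r hr hrd
              rcases pdvd5 hr p2 p3 p5 p7 p11 hrd with rfl|rfl|rfl|rfl|rfl
              · exact Or.inl (by decide)
              · exact Or.inl (by decide)
              · exact Or.inl (by decide)
              · exact Or.inl (by decide)
              · exact Or.inr (fun hdvd => absurd (hmax 11 (by norm_num) hdvd) (by omega))
            · rw [prod_quad _ (by norm_num) (by norm_num) (by norm_num) (by norm_num) (by norm_num) (by norm_num), ha2, ha3, hvq, ha7]
              norm_num
            · rw [prod_quad _ (by norm_num) (by norm_num) (by norm_num) (by norm_num) (by norm_num) (by norm_num), ha2, ha3, hvq, ha7, d4c p2 p3 p5 p7 (by norm_num) (by norm_num) (by norm_num) (by norm_num) (by norm_num) (by norm_num), d5c p2 p3 p5 p7 p11 (by norm_num) (by norm_num) (by norm_num) (by norm_num) (by norm_num) (by norm_num) (by norm_num) (by norm_num) (by norm_num) (by norm_num)]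
              try norm_num
          · refine move hc {2,3,5,7} (by decide) (2^6*3^3*5^1*7^1*11^1) ?_ ?_ ?_
            · intro r hr hrd
              rcases pdvd5 hr p2 p3 p5 p7 p11 hrd with rfl|rfl|rfl|rfl|rfl
              · exact Or.inl (by decide)
              · exact Or.inl (by decide)
              · exact Or.inl (by decide)
              · exact Or.inl (by decide)
              · exact Or.inr (fun hdvd => absurd (hmax 11 (by norm_num) hdvd) (by omega))
            · rw [prod_quad _ (by norm_num) (by norm_num) (by norm_num) (by norm_num) (by norm_num) (by norm_num), ha2, ha3, hvq, ha7]
              norm_num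
            · rw [prod_quad _ (by norm_num) (by norm_num) (by norm_num) (by norm_num) (by norm_num) (by norm_num), ha2, ha3, hvq, ha7, d4c p2 p3 p5 p7 (by norm_num) (by norm_num) (by norm_num) (by norm_num) (by norm_num) (by norm_num), d5c p2 p3 p5 p7 p11 (by norm_num) (by norm_num) (by norm_num) (by norm_num) (by norm_num) (by norm_num) (by norm_num) (by norm_num) (by norm_num) (by norm_num)]
              try norm_num
        · -- a3 = 3
          interval_cases a7
          · refine move hc {2,3,5,7} (by decide) (2^4*3^2*5^2*7^1*11^1) ?_ ?_ ?_
            · intro r hr hrd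
              rcases pdvd5 hr p2 p3 p5 p7 p11 hrd with rfl|rfl|rfl|rfl|rfl
              · exact Or.inl (by decide)
              · exact Or.inl (by decide)
              · exact Or.inl (by decide)
              · exact Or.inl (by decide)
              · exact Or.inr (fun hdvd => absurd (hmax 11 (by norm_num) hdvd) (by omega))
            · rw [prod_quad _ (by norm_num) (by norm_num) (by norm_num) (by norm_num) (by norm_num) (by norm_num), ha2, ha3, hvq, ha7]
              norm_num
            · rw [prod_quad _ (by norm_num) (by norm_num) (by norm_num) (by norm_num) (by norm_num) (by norm_num), ha2, ha3, hvq, ha7, d4c p2 p3 p5 p7 (by norm_num) (by norm_num) (by norm_num) (by norm_num) (by norm_num) (by norm_num), d5c p2 p3 p5 p7 p11 (by norm_num) (by norm_num) (by norm_num) (by norm_num) (by norm_num) (by norm_num) (by norm_num) (by norm_num) (by norm_num) (by norm_num)]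
              try norm_num
          · refine move hc {2,3,5,7} (by decide) (2^5*3^2*5^1*7^1*11^1*13^1) ?_ ?_ ?_
            · intro r hr hrd
              rcases pdvd6 hr p2 p3 p5 p7 p11 p13 hrd with rfl|rfl|rfl|rfl|rfl|rfl
              · exact Or.inl (by decide)
              · exact Or.inl (by decide)
              · exact Or.inl (by decide)
              · exact Or.inl (by decide)
              · exact Or.inr (fun hdvd => absurd (hmax 11 (by norm_num) hdvd) (by omega))
              · exact Or.inr (fun hdvd => absurd (hmax 13 (by norm_num) hdvd) (by omega))
            · rw [prod_quad _ (by norm_num) (by norm_num) (by norm_num) (by norm_num) (by norm_num) (by norm_num), ha2, ha3, hvq, ha7]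
              norm_num
            · rw [prod_quad _ (by norm_num) (by norm_num) (by norm_num) (by norm_num) (by norm_num) (by norm_num), ha2, ha3, hvq, ha7, d4c p2 p3 p5 p7 (by norm_num) (by norm_num) (by norm_num) (by norm_num) (by norm_num) (by norm_num), d6c p2 p3 p5 p7 p11 p13 (by norm_num) (by norm_num) (by norm_num) (by norm_num) (by norm_num) (by norm_num) (by norm_num) (by norm_num) (by norm_num) (by norm_num) (by norm_num) (by norm_num) (by norm_num) (by norm_num) (by norm_num)]
              try norm_num
        · -- a3 = 4
          interval_cases a7
          · refine move hc {2,3,5,7} (by decide) (2^4*3^2*5^1*7^1*11^1*13^1) ?_ ?_ ?_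
            · intro r hr hrd
              rcases pdvd6 hr p2 p3 p5 p7 p11 p13 hrd with rfl|rfl|rfl|rfl|rfl|rfl
              · exact Or.inl (by decide)
              · exact Or.inl (by decide)
              · exact Or.inl (by decide)
              · exact Or.inl (by decide)
              · exact Or.inr (fun hdvd => absurd (hmax 11 (by norm_num) hdvd) (by omega))
              · exact Or.inr (fun hdvd => absurd (hmax 13 (by norm_num) hdvd) (by omega))
            · rw [prod_quad _ (by norm_num) (by norm_num) (by norm_num) (by norm_num) (by norm_num) (by norm_num), ha2, ha3, hvq, ha7]
              norm_num
            · rw [prod_quad _ (by norm_num) (by norm_num) (by norm_num) (by norm_num) (by norm_num) (by norm_num), ha2, ha3, hvq, ha7, d4c p2 p3 p5 p7 (by norm_num) (by norm_num) (by norm_num) (by norm_num) (by norm_num) (by norm_num), d6c p2 p3 p5 p7 p11 p13 (by norm_num) (by norm_num) (by norm_num) (by norm_num) (by norm_num) (by norm_num) (by norm_num) (by norm_num) (by norm_num) (by norm_num) (by norm_num) (by norm_num) (by norm_num) (by norm_num) (by norm_num)]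
              try norm_num
          · refine move hc {2,3,5,7} (by decide) (2^5*3^3*5^1*7^1*11^1*13^1) ?_ ?_ ?_
            · intro r hr hrd
              rcases pdvd6 hr p2 p3 p5 p7 p11 p13 hrd with rfl|rfl|rfl|rfl|rfl|rfl
              · exact Or.inl (by decide)
              · exact Or.inl (by decide)
              · exact Or.inl (by decide)
              · exact Or.inl (by decide)
              · exact Or.inr (fun hdvd => absurd (hmax 11 (by norm_num) hdvd) (by omega))
              · exact Or.inr (fun hdvd => absurd (hmax 13 (by norm_num) hdvd) (by omega))
            · rw [prod_quad _ (by norm_num) (by norm_num) (by norm_num) (by norm_num) (by norm_num) (by norm_num), ha2, ha3, hvq, ha7]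
              norm_num
            · rw [prod_quad _ (by norm_num) (by norm_num) (by norm_num) (by norm_num) (by norm_num) (by norm_num), ha2, ha3, hvq, ha7, d4c p2 p3 p5 p7 (by norm_num) (by norm_num) (by norm_num) (by norm_num) (by norm_num) (by norm_num), d6c p2 p3 p5 p7 p11 p13 (by norm_num) (by norm_num) (by norm_num) (by norm_num) (by norm_num) (by norm_num) (by norm_num) (by norm_num) (by norm_num) (by norm_num) (by norm_num) (by norm_num) (by norm_num) (by norm_num) (by norm_num)]
              try norm_num
        · -- a3 = 5
          interval_cases a7
          · refine move hc {2,3,5,7} (by decide) (2^4*3^3*5^1*7^1*11^1*13^1) ?_ ?_ ?_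
            · intro r hr hrd
              rcases pdvd6 hr p2 p3 p5 p7 p11 p13 hrd with rfl|rfl|rfl|rfl|rfl|rfl
              · exact Or.inl (by decide)
              · exact Or.inl (by decide)
              · exact Or.inl (by decide)
              · exact Or.inl (by decide)
              · exact Or.inr (fun hdvd => absurd (hmax 11 (by norm_num) hdvd) (by omega))
              · exact Or.inr (fun hdvd => absurd (hmax 13 (by norm_num) hdvd) (by omega))
            · rw [prod_quad _ (by norm_num) (by norm_num) (by norm_num) (by norm_num) (by norm_num) (by norm_num), ha2, ha3, hvq, ha7]
              norm_num
            · rw [prod_quad _ (by norm_num) (by norm_num) (by norm_num) (by norm_num) (by norm_num) (by norm_num), ha2, ha3, hvq, ha7, d4c p2 p3 p5 p7 (by norm_num) (by norm_num) (by norm_num) (by norm_num) (by norm_num) (by norm_num), d6c p2 p3 p5 p7 p11 p13 (by norm_num) (by norm_num) (by norm_num) (by norm_num) (by norm_num) (by norm_num) (by norm_num) (by norm_num) (by norm_num) (by norm_num) (by norm_num) (by norm_num) (by norm_num) (by norm_num) (by norm_num)]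
              try norm_num
          · refine move hc {2,3,5,7} (by decide) (2^7*3^3*5^1*7^1*11^1*13^1) ?_ ?_ ?_
            · intro r hr hrd
              rcases pdvd6 hr p2 p3 p5 p7 p11 p13 hrd with rfl|rfl|rfl|rfl|rfl|rfl
              · exact Or.inl (by decide)
              · exact Or.inl (by decide)
              · exact Or.inl (by decide)
              · exact Or.inl (by decide)
              · exact Or.inr (fun hdvd => absurd (hmax 11 (by norm_num) hdvd) (by omega))
              · exact Or.inr (fun hdvd => absurd (hmax 13 (by norm_num) hdvd) (by omega))
            · rw [prod_quad _ (by norm_num) (by norm_num) (by norm_num) (by norm_num) (by norm_num) (by norm_num), ha2, ha3, hvq, ha7]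
              norm_num
            · rw [prod_quad _ (by norm_num) (by norm_num) (by norm_num) (by norm_num) (by norm_num) (by norm_num), ha2, ha3, hvq, ha7, d4c p2 p3 p5 p7 (by norm_num) (by norm_num) (by norm_num) (by norm_num) (by norm_num) (by norm_num), d6c p2 p3 p5 p7 p11 p13 (by norm_num) (by norm_num) (by norm_num) (by norm_num) (by norm_num) (by norm_num) (by norm_num) (by norm_num) (by norm_num) (by norm_num) (by norm_num) (by norm_num) (by norm_num) (by norm_num) (by norm_num)]
              try norm_num
        · -- a3 = 6
          interval_cases a7
          · refine move hc {2,3,5,7} (by decide) (2^5*3^2*5^2*7^1*11^1*13^1) ?_ ?_ ?_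
            · intro r hr hrd
              rcases pdvd6 hr p2 p3 p5 p7 p11 p13 hrd with rfl|rfl|rfl|rfl|rfl|rfl
              · exact Or.inl (by decide)
              · exact Or.inl (by decide)
              · exact Or.inl (by decide)
              · exact Or.inl (by decide)
              · exact Or.inr (fun hdvd => absurd (hmax 11 (by norm_num) hdvd) (by omega))
              · exact Or.inr (fun hdvd => absurd (hmax 13 (by norm_num) hdvd) (by omega))
            · rw [prod_quad _ (by norm_num) (by norm_num) (by norm_num) (by norm_num) (by norm_num) (by norm_num), ha2, ha3, hvq, ha7]
              norm_num
            · rw [prod_quad _ (by norm_num) (by norm_num) (by norm_num) (by norm_num) (by norm_num) (by norm_num), ha2, ha3, hvq, ha7, d4c p2 p3 p5 p7 (by norm_num) (by norm_num) (by norm_num) (by norm_num) (by norm_num) (by norm_num), d6c p2 p3 p5 p7 p11 p13 (by norm_num) (by norm_num) (by norm_num) (by norm_num) (by norm_num) (by norm_num) (by norm_num) (by norm_num) (by norm_num) (by norm_num) (by norm_num) (by norm_num) (by norm_num) (by norm_num) (by norm_num)]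
              try norm_num
          · refine move hc {2,3,5,7} (by decide) (2^6*3^3*5^2*7^1*11^1*13^1) ?_ ?_ ?_
            · intro r hr hrd
              rcases pdvd6 hr p2 p3 p5 p7 p11 p13 hrd with rfl|rfl|rfl|rfl|rfl|rfl
              · exact Or.inl (by decide)
              · exact Or.inl (by decide)
              · exact Or.inl (by decide)
              · exact Or.inl (by decide)
              · exact Or.inr (fun hdvd => absurd (hmax 11 (by norm_num) hdvd) (by omega))
              · exact Or.inr (fun hdvd => absurd (hmax 13 (by norm_num) hdvd) (by omega))
            · rw [prod_quad _ (by norm_num) (by norm_num) (by norm_num) (by norm_num) (by norm_num) (by norm_num), ha2, ha3, hvq, ha7]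
              norm_num
            · rw [prod_quad _ (by norm_num) (by norm_num) (by norm_num) (by norm_num) (by norm_num) (by norm_num), ha2, ha3, hvq, ha7, d4c p2 p3 p5 p7 (by norm_num) (by norm_num) (by norm_num) (by norm_num) (by norm_num) (by norm_num), d6c p2 p3 p5 p7 p11 p13 (by norm_num) (by norm_num) (by norm_num) (by norm_num) (by norm_num) (by norm_num) (by norm_num) (by norm_num) (by norm_num) (by norm_num) (by norm_num) (by norm_num) (by norm_num) (by norm_num) (by norm_num)]
              try norm_num
    · -- 7 does not divide n
      have hpr5 : pr = 5 := by
        have h5le : (5:ℕ) ≤ pr := hqu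
        have hne7 : pr ≠ 7 := by rintro rfl; exact h7 hprdvd
        interval_cases pr
        · rfl
        · exact absurd hpr (by norm_num)
        · exact absurd rfl hne7
        · exact absurd hpr (by norm_num)
      have hall : ∀ r, r.Prime → r ∣ n → r ∈ ({2,3,5} : Finset ℕ) := by
        intro r hr hrd
        have hle := hmax r hr hrd
        have h2le := hr.two_le
        rw [hpr5] at hle
        interval_cases r <;> revert hr <;> decide
      have hpin : n = 2^a2*3^a3*5^2 := by
        have hh := pin hn0 {2,3,5} (by decide) hall
        rwa [prod_triple _ (by norm_num) (by norm_num) (by norm_num), ha2, ha3, hvq] at hh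
      interval_cases a2
      · -- a2 = 4
        interval_cases a3
        · rw [hpin] at hbig
          norm_num at hbig
        · rw [hpin] at hbig
          norm_num at hbig
        · rw [hpin] at hbig
          norm_num at hbig
      · -- a2 = 5
        interval_cases a3
        · rw [hpin] at hbig
          norm_num at hbig
        · rw [hpin] at hbig
          norm_num at hbig
        · refine move hc {2,3,5} (by decide) (2^4*3^2*5^1*7^1*11^1) ?_ ?_ ?_
          · intro r hr hrd
            rcases pdvd5 hr p2 p3 p5 p7 p11 hrd with rfl|rfl|rfl|rfl|rfl
            · exact Or.inl (by decide)
            · exact Or.inl (by decide)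
            · exact Or.inl (by decide)
            · exact Or.inr h7
            · exact Or.inr (fun hdvd => absurd (hmax 11 (by norm_num) hdvd) (by omega))
          · rw [prod_triple _ (by norm_num) (by norm_num) (by norm_num), ha2, ha3, hvq]
            norm_num
          · rw [prod_triple _ (by norm_num) (by norm_num) (by norm_num), ha2, ha3, hvq, d3c p2 p3 p5 (by norm_num) (by norm_num) (by norm_num), d5c p2 p3 p5 p7 p11 (by norm_num) (by norm_num) (by norm_num) (by norm_num) (by norm_num) (by norm_num) (by norm_num) (by norm_num) (by norm_num) (by norm_num)]
            try norm_num
        · refine move hc {2,3,5} (by decide) (2^4*3^3*5^1*7^1*11^1) ?_ ?_ ?_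
          · intro r hr hrd
            rcases pdvd5 hr p2 p3 p5 p7 p11 hrd with rfl|rfl|rfl|rfl|rfl
            · exact Or.inl (by decide)
            · exact Or.inl (by decide)
            · exact Or.inl (by decide)
            · exact Or.inr h7
            · exact Or.inr (fun hdvd => absurd (hmax 11 (by norm_num) hdvd) (by omega))
          · rw [prod_triple _ (by norm_num) (by norm_num) (by norm_num), ha2, ha3, hvq]
            norm_num
          · rw [prod_triple _ (by norm_num) (by norm_num) (by norm_num), ha2, ha3, hvq, d3c p2 p3 p5 (by norm_num) (by norm_num) (by norm_num), d5c p2 p3 p5 p7 p11 (by norm_num) (by norm_num) (by norm_num) (by norm_num) (by norm_num) (by norm_num) (by norm_num) (by norm_num) (by norm_num) (by norm_num)]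
            try norm_num
      · -- a2 = 6
        interval_cases a3
        · rw [hpin] at hbig
          norm_num at hbig
        · rw [hpin] at hbig
          norm_num at hbig
        · refine move hc {2,3,5} (by decide) (2^5*3^2*5^1*7^1*11^1) ?_ ?_ ?_
          · intro r hr hrd
            rcases pdvd5 hr p2 p3 p5 p7 p11 hrd with rfl|rfl|rfl|rfl|rfl
            · exact Or.inl (by decide)
            · exact Or.inl (by decide)
            · exact Or.inl (by decide)
            · exact Or.inr h7
            · exact Or.inr (fun hdvd => absurd (hmax 11 (by norm_num) hdvd) (by omega))
          · rw [prod_triple _ (by norm_num) (by norm_num) (by norm_num), ha2, ha3, hvq]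
            norm_num
          · rw [prod_triple _ (by norm_num) (by norm_num) (by norm_num), ha2, ha3, hvq, d3c p2 p3 p5 (by norm_num) (by norm_num) (by norm_num), d5c p2 p3 p5 p7 p11 (by norm_num) (by norm_num) (by norm_num) (by norm_num) (by norm_num) (by norm_num) (by norm_num) (by norm_num) (by norm_num) (by norm_num)]
            try norm_num
        · refine move hc {2,3,5} (by decide) (2^5*3^3*5^1*7^1*11^1) ?_ ?_ ?_
          · intro r hr hrd
            rcases pdvd5 hr p2 p3 p5 p7 p11 hrd with rfl|rfl|rfl|rfl|rfl
            · exact Or.inl (by decide)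
            · exact Or.inl (by decide)
            · exact Or.inl (by decide)
            · exact Or.inr h7
            · exact Or.inr (fun hdvd => absurd (hmax 11 (by norm_num) hdvd) (by omega))
          · rw [prod_triple _ (by norm_num) (by norm_num) (by norm_num), ha2, ha3, hvq]
            norm_num
          · rw [prod_triple _ (by norm_num) (by norm_num) (by norm_num), ha2, ha3, hvq, d3c p2 p3 p5 (by norm_num) (by norm_num) (by norm_num), d5c p2 p3 p5 p7 p11 (by norm_num) (by norm_num) (by norm_num) (by norm_num) (by norm_num) (by norm_num) (by norm_num) (by norm_num) (by norm_num) (by norm_num)]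
            try norm_num
        · refine move hc {2,3,5} (by decide) (2^3*3^3*5^1*7^1*11^1*13^1) ?_ ?_ ?_
          · intro r hr hrd
            rcases pdvd6 hr p2 p3 p5 p7 p11 p13 hrd with rfl|rfl|rfl|rfl|rfl|rfl
            · exact Or.inl (by decide)
            · exact Or.inl (by decide)
            · exact Or.inl (by decide)
            · exact Or.inr h7
            · exact Or.inr (fun hdvd => absurd (hmax 11 (by norm_num) hdvd) (by omega))
            · exact Or.inr (fun hdvd => absurd (hmax 13 (by norm_num) hdvd) (by omega))
          · rw [prod_triple _ (by norm_num) (by norm_num) (by norm_num), ha2, ha3, hvq]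
            norm_num
          · rw [prod_triple _ (by norm_num) (by norm_num) (by norm_num), ha2, ha3, hvq, d3c p2 p3 p5 (by norm_num) (by norm_num) (by norm_num), d6c p2 p3 p5 p7 p11 p13 (by norm_num) (by norm_num) (by norm_num) (by norm_num) (by norm_num) (by norm_num) (by norm_num) (by norm_num) (by norm_num) (by norm_num) (by norm_num) (by norm_num) (by norm_num) (by norm_num) (by norm_num)]
            try norm_num
  · exact absurd hq (by norm_num)  -- q = 6
  · -- q = 7
    have hpr12 : pr ≤ 12 := by omega
    have h5d : (5:ℕ) ∣ n := primes_dvd hc hpr hprdvd 5 p5 (by omega)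
    have hm57 : n.factorization 7 ≤ n.factorization 5 := mono_exp hc p5 p7 (by norm_num)
    have hv5l : 2 ≤ n.factorization 5 := by rw [hvq] at hm57; exact hm57
    have hv5u : n.factorization 5 ≤ 2 := by
      by_contra hcon
      exact K2 hc hq p5 hp (by norm_num) hpn hqd h5d hvq (by omega) (by omega)
    have hv5 : n.factorization 5 = 2 := by omega
    have hv3l : 2 ≤ n.factorization 3 := by
      by_contra hcon
      exact K5 hc p3 hq (by norm_num) h3d hqd hvq 1 (by norm_num) (by omega)
    have hv3u : n.factorization 3 ≤ 6 := by
      by_contra hcon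
      refine K3 hc p3 hq hp (by norm_num) hpn h3d hqd hvq (by omega) ?_
      rw [show (3:ℕ)^2*7 = 63 from by norm_num]
      omega
    have hv2l : 4 ≤ n.factorization 2 := by
      by_contra hcon
      exact K5 hc p2 hq (by norm_num) h2d hqd hvq 2 (by norm_num) (by omega)
    have hm23 : n.factorization 3 ≤ n.factorization 2 := mono_exp hc p2 p3 (by norm_num)
    obtain ⟨a2, ha2⟩ : ∃ a, n.factorization 2 = a := ⟨_, rfl⟩
    obtain ⟨a3, ha3⟩ : ∃ a, n.factorization 3 = a := ⟨_, rfl⟩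
    rw [ha2] at hv2l hv2u hm23
    rw [ha3] at hv3l hv3u hm23
    interval_cases a2
    · -- a2 = 4
      interval_cases a3
      · exact K67 hc hq h2d h3d hqd (by norm_num) (by norm_num) hvq 1 1 (by norm_num)
          (by rw [ha2, ha3]; try norm_num)
      · exact K67 hc hq h2d h3d hqd (by norm_num) (by norm_num) hvq 1 1 (by norm_num)
          (by rw [ha2, ha3]; try norm_num)
      · refine move hc {2,3,5,7} (by decide) (2^7*3^3*5^1*7^1*13^1) ?_ ?_ ?_
        · intro r hr hrd
          rcases pdvd5 hr p2 p3 p5 p7 p13 hrd with rfl|rfl|rfl|rfl|rfl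
          · exact Or.inl (by decide)
          · exact Or.inl (by decide)
          · exact Or.inl (by decide)
          · exact Or.inl (by decide)
          · exact Or.inr (fun hdvd => absurd (hmax 13 (by norm_num) hdvd) (by omega))
        · rw [prod_quad _ (by norm_num) (by norm_num) (by norm_num) (by norm_num) (by norm_num) (by norm_num), ha2, ha3, hv5, hvq]
          norm_num
        · rw [prod_quad _ (by norm_num) (by norm_num) (by norm_num) (by norm_num) (by norm_num) (by norm_num), ha2, ha3, hv5, hvq, d4c p2 p3 p5 p7 (by norm_num) (by norm_num) (by norm_num) (by norm_num) (by norm_num) (by norm_num), d5c p2 p3 p5 p7 p13 (by norm_num) (by norm_num) (by norm_num) (by norm_num) (by norm_num) (by norm_num) (by norm_num) (by norm_num) (by norm_num) (by norm_num)]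
          try norm_num
    · -- a2 = 5
      interval_cases a3
      · exact K67 hc hq h2d h3d hqd (by norm_num) (by norm_num) hvq 1 1 (by norm_num)
          (by rw [ha2, ha3]; try norm_num)
      · refine move hc {2,3,5,7} (by decide) (2^4*3^3*5^2*7^1*13^1) ?_ ?_ ?_
        · intro r hr hrd
          rcases pdvd5 hr p2 p3 p5 p7 p13 hrd with rfl|rfl|rfl|rfl|rfl
          · exact Or.inl (by decide)
          · exact Or.inl (by decide)
          · exact Or.inl (by decide)
          · exact Or.inl (by decide)
          · exact Or.inr (fun hdvd => absurd (hmax 13 (by norm_num) hdvd) (by omega))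
        · rw [prod_quad _ (by norm_num) (by norm_num) (by norm_num) (by norm_num) (by norm_num) (by norm_num), ha2, ha3, hv5, hvq]
          norm_num
        · rw [prod_quad _ (by norm_num) (by norm_num) (by norm_num) (by norm_num) (by norm_num) (by norm_num), ha2, ha3, hv5, hvq, d4c p2 p3 p5 p7 (by norm_num) (by norm_num) (by norm_num) (by norm_num) (by norm_num) (by norm_num), d5c p2 p3 p5 p7 p13 (by norm_num) (by norm_num) (by norm_num) (by norm_num) (by norm_num) (by norm_num) (by norm_num) (by norm_num) (by norm_num) (by norm_num)]
          try norm_num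
      · refine move hc {2,3,5,7} (by decide) (2^4*3^4*5^2*7^1*13^1) ?_ ?_ ?_
        · intro r hr hrd
          rcases pdvd5 hr p2 p3 p5 p7 p13 hrd with rfl|rfl|rfl|rfl|rfl
          · exact Or.inl (by decide)
          · exact Or.inl (by decide)
          · exact Or.inl (by decide)
          · exact Or.inl (by decide)
          · exact Or.inr (fun hdvd => absurd (hmax 13 (by norm_num) hdvd) (by omega))
        · rw [prod_quad _ (by norm_num) (by norm_num) (by norm_num) (by norm_num) (by norm_num) (by norm_num), ha2, ha3, hv5, hvq]
          norm_num
        · rw [prod_quad _ (by norm_num) (by norm_num) (by norm_num) (by norm_num) (by norm_num) (by norm_num), ha2, ha3, hv5, hvq, d4c p2 p3 p5 p7 (by norm_num) (by norm_num) (by norm_num) (by norm_num) (by norm_num) (by norm_num), d5c p2 p3 p5 p7 p13 (by norm_num) (by norm_num) (by norm_num) (by norm_num) (by norm_num) (by norm_num) (by norm_num) (by norm_num) (by norm_num) (by norm_num)]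
          try norm_num
      · refine move hc {2,3,5,7} (by decide) (2^7*3^3*5^2*7^1*13^1) ?_ ?_ ?_
        · intro r hr hrd
          rcases pdvd5 hr p2 p3 p5 p7 p13 hrd with rfl|rfl|rfl|rfl|rfl
          · exact Or.inl (by decide)
          · exact Or.inl (by decide)
          · exact Or.inl (by decide)
          · exact Or.inl (by decide)
          · exact Or.inr (fun hdvd => absurd (hmax 13 (by norm_num) hdvd) (by omega))
        · rw [prod_quad _ (by norm_num) (by norm_num) (by norm_num) (by norm_num) (by norm_num) (by norm_num), ha2, ha3, hv5, hvq]
          norm_num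
        · rw [prod_quad _ (by norm_num) (by norm_num) (by norm_num) (by norm_num) (by norm_num) (by norm_num), ha2, ha3, hv5, hvq, d4c p2 p3 p5 p7 (by norm_num) (by norm_num) (by norm_num) (by norm_num) (by norm_num) (by norm_num), d5c p2 p3 p5 p7 p13 (by norm_num) (by norm_num) (by norm_num) (by norm_num) (by norm_num) (by norm_num) (by norm_num) (by norm_num) (by norm_num) (by norm_num)]
          try norm_num
    · -- a2 = 6
      interval_cases a3
      · exact K67 hc hq h2d h3d hqd (by norm_num) (by norm_num) hvq 1 1 (by norm_num)
          (by rw [ha2, ha3]; try norm_num)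
      · refine move hc {2,3,5,7} (by decide) (2^5*3^3*5^2*7^1*13^1) ?_ ?_ ?_
        · intro r hr hrd
          rcases pdvd5 hr p2 p3 p5 p7 p13 hrd with rfl|rfl|rfl|rfl|rfl
          · exact Or.inl (by decide)
          · exact Or.inl (by decide)
          · exact Or.inl (by decide)
          · exact Or.inl (by decide)
          · exact Or.inr (fun hdvd => absurd (hmax 13 (by norm_num) hdvd) (by omega))
        · rw [prod_quad _ (by norm_num) (by norm_num) (by norm_num) (by norm_num) (by norm_num) (by norm_num), ha2, ha3, hv5, hvq]
          norm_num
        · rw [prod_quad _ (by norm_num) (by norm_num) (by norm_num) (by norm_num) (by norm_num) (by norm_num), ha2, ha3, hv5, hvq, d4c p2 p3 p5 p7 (by norm_num) (by norm_num) (by norm_num) (by norm_num) (by norm_num) (by norm_num), d5c p2 p3 p5 p7 p13 (by norm_num) (by norm_num) (by norm_num) (by norm_num) (by norm_num) (by norm_num) (by norm_num) (by norm_num) (by norm_num) (by norm_num)]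
          try norm_num
      · refine move hc {2,3,5,7} (by decide) (2^5*3^4*5^2*7^1*13^1) ?_ ?_ ?_
        · intro r hr hrd
          rcases pdvd5 hr p2 p3 p5 p7 p13 hrd with rfl|rfl|rfl|rfl|rfl
          · exact Or.inl (by decide)
          · exact Or.inl (by decide)
          · exact Or.inl (by decide)
          · exact Or.inl (by decide)
          · exact Or.inr (fun hdvd => absurd (hmax 13 (by norm_num) hdvd) (by omega))
        · rw [prod_quad _ (by norm_num) (by norm_num) (by norm_num) (by norm_num) (by norm_num) (by norm_num), ha2, ha3, hv5, hvq]
          norm_num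
        · rw [prod_quad _ (by norm_num) (by norm_num) (by norm_num) (by norm_num) (by norm_num) (by norm_num), ha2, ha3, hv5, hvq, d4c p2 p3 p5 p7 (by norm_num) (by norm_num) (by norm_num) (by norm_num) (by norm_num) (by norm_num), d5c p2 p3 p5 p7 p13 (by norm_num) (by norm_num) (by norm_num) (by norm_num) (by norm_num) (by norm_num) (by norm_num) (by norm_num) (by norm_num) (by norm_num)]
          try norm_num
      · refine move hc {2,3,5,7} (by decide) (2^5*3^3*5^2*7^2*13^1) ?_ ?_ ?_
        · intro r hr hrd
          rcases pdvd5 hr p2 p3 p5 p7 p13 hrd with rfl|rfl|rfl|rfl|rfl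
          · exact Or.inl (by decide)
          · exact Or.inl (by decide)
          · exact Or.inl (by decide)
          · exact Or.inl (by decide)
          · exact Or.inr (fun hdvd => absurd (hmax 13 (by norm_num) hdvd) (by omega))
        · rw [prod_quad _ (by norm_num) (by norm_num) (by norm_num) (by norm_num) (by norm_num) (by norm_num), ha2, ha3, hv5, hvq]
          norm_num
        · rw [prod_quad _ (by norm_num) (by norm_num) (by norm_num) (by norm_num) (by norm_num) (by norm_num), ha2, ha3, hv5, hvq, d4c p2 p3 p5 p7 (by norm_num) (by norm_num) (by norm_num) (by norm_num) (by norm_num) (by norm_num), d5c p2 p3 p5 p7 p13 (by norm_num) (by norm_num) (by norm_num) (by norm_num) (by norm_num) (by norm_num) (by norm_num) (by norm_num) (by norm_num) (by norm_num)]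
          try norm_num
      · refine move hc {2,3,5,7} (by decide) (2^7*3^3*5^2*7^2*13^1) ?_ ?_ ?_
        · intro r hr hrd
          rcases pdvd5 hr p2 p3 p5 p7 p13 hrd with rfl|rfl|rfl|rfl|rfl
          · exact Or.inl (by decide)
          · exact Or.inl (by decide)
          · exact Or.inl (by decide)
          · exact Or.inl (by decide)
          · exact Or.inr (fun hdvd => absurd (hmax 13 (by norm_num) hdvd) (by omega))
        · rw [prod_quad _ (by norm_num) (by norm_num) (by norm_num) (by norm_num) (by norm_num) (by norm_num), ha2, ha3, hv5, hvq]
          norm_num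
        · rw [prod_quad _ (by norm_num) (by norm_num) (by norm_num) (by norm_num) (by norm_num) (by norm_num), ha2, ha3, hv5, hvq, d4c p2 p3 p5 p7 (by norm_num) (by norm_num) (by norm_num) (by norm_num) (by norm_num) (by norm_num), d5c p2 p3 p5 p7 p13 (by norm_num) (by norm_num) (by norm_num) (by norm_num) (by norm_num) (by norm_num) (by norm_num) (by norm_num) (by norm_num) (by norm_num)]
          try norm_num
  · exact absurd hq (by norm_num)  -- q = 8
  · exact absurd hq (by norm_num)  -- q = 9
  · exact absurd hq (by norm_num)  -- q = 10
  · -- q = 11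
    have hpr20 : pr ≤ 20 := by omega
    have hv2l : 6 ≤ n.factorization 2 := by
      by_contra hcon
      refine K5 hc p2 hq (by norm_num) h2d hqd hvq 3 ?_ (by omega)
      rw [show (2:ℕ)^3 = 8 from by norm_num]
      omega
    have hv2 : n.factorization 2 = 6 := by omega
    have hv3u : n.factorization 3 ≤ 6 := by
      by_contra hcon
      refine K3 hc p3 hq hp (by norm_num) hpn h3d hqd hvq (by omega) ?_
      rw [show (3:ℕ)^2*11 = 99 from by norm_num]
      omega
    have hv3l : 4 ≤ n.factorization 3 := by
      by_contra hcon
      refine K5 hc p3 hq (by norm_num) h3d hqd hvq 2 ?_ (by omega)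
      rw [show (3:ℕ)^2 = 9 from by norm_num]
      omega
    obtain ⟨a3, ha3⟩ : ∃ a, n.factorization 3 = a := ⟨_, rfl⟩
    rw [ha3] at hv3l hv3u
    interval_cases a3
    · -- a3 = 4
      have h5d : (5:ℕ) ∣ n := primes_dvd hc hpr hprdvd 5 p5 (by omega)
      have hm511 : n.factorization 11 ≤ n.factorization 5 := mono_exp hc p5 p11 (by norm_num)
      have hv5l : 2 ≤ n.factorization 5 := by rw [hvq] at hm511; exact hm511
      have hv5u : n.factorization 5 ≤ 2 := by
        by_contra hcon
        exact K2 hc hq p5 hp (by norm_num) hpn hqd h5d hvq (by omega) (by omega)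
      have hv5 : n.factorization 5 = 2 := by omega
      refine move hc {2,3,5,11} (by decide) (2^7*3^4*5^1*11^1*23^1) ?_ ?_ ?_
      · intro r hr hrd
        rcases pdvd5 hr p2 p3 p5 p11 p23 hrd with rfl|rfl|rfl|rfl|rfl
        · exact Or.inl (by decide)
        · exact Or.inl (by decide)
        · exact Or.inl (by decide)
        · exact Or.inl (by decide)
        · exact Or.inr (fun hdvd => absurd (hmax 23 (by norm_num) hdvd) (by omega))
      · rw [prod_quad _ (by norm_num) (by norm_num) (by norm_num) (by norm_num) (by norm_num) (by norm_num), hv2, ha3, hv5, hvq]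
        norm_num
      · rw [prod_quad _ (by norm_num) (by norm_num) (by norm_num) (by norm_num) (by norm_num) (by norm_num), hv2, ha3, hv5, hvq, d4c p2 p3 p5 p11 (by norm_num) (by norm_num) (by norm_num) (by norm_num) (by norm_num) (by norm_num), d5c p2 p3 p5 p11 p23 (by norm_num) (by norm_num) (by norm_num) (by norm_num) (by norm_num) (by norm_num) (by norm_num) (by norm_num) (by norm_num) (by norm_num)]
        try norm_num
    · -- a3 = 5
      refine move hc {2,3,11} (by decide) (2^7*3^3*11^1*23^1) ?_ ?_ ?_
      · intro r hr hrd
        rcases pdvd4 hr p2 p3 p11 p23 hrd with rfl|rfl|rfl|rfl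
        · exact Or.inl (by decide)
        · exact Or.inl (by decide)
        · exact Or.inl (by decide)
        · exact Or.inr (fun hdvd => absurd (hmax 23 (by norm_num) hdvd) (by omega))
      · rw [prod_triple _ (by norm_num) (by norm_num) (by norm_num), hv2, ha3, hvq]
        norm_num
      · rw [prod_triple _ (by norm_num) (by norm_num) (by norm_num), hv2, ha3, hvq, d3c p2 p3 p11 (by norm_num) (by norm_num) (by norm_num), d4c p2 p3 p11 p23 (by norm_num) (by norm_num) (by norm_num) (by norm_num) (by norm_num) (by norm_num)]
        try norm_num
    · -- a3 = 6
      refine move hc {2,3,11} (by decide) (2^7*3^4*11^1*23^1) ?_ ?_ ?_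
      · intro r hr hrd
        rcases pdvd4 hr p2 p3 p11 p23 hrd with rfl|rfl|rfl|rfl
        · exact Or.inl (by decide)
        · exact Or.inl (by decide)
        · exact Or.inl (by decide)
        · exact Or.inr (fun hdvd => absurd (hmax 23 (by norm_num) hdvd) (by omega))
      · rw [prod_triple _ (by norm_num) (by norm_num) (by norm_num), hv2, ha3, hvq]
        norm_num
      · rw [prod_triple _ (by norm_num) (by norm_num) (by norm_num), hv2, ha3, hvq, d3c p2 p3 p11 (by norm_num) (by norm_num) (by norm_num), d4c p2 p3 p11 p23 (by norm_num) (by norm_num) (by norm_num) (by norm_num) (by norm_num) (by norm_num)]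
        try norm_num
  · exact absurd hq (by norm_num)  -- q = 12
  · -- q = 13
    have hpr24 : pr ≤ 24 := by omega
    have hv2l : 6 ≤ n.factorization 2 := by
      by_contra hcon
      refine K5 hc p2 hq (by norm_num) h2d hqd hvq 3 ?_ (by omega)
      rw [show (2:ℕ)^3 = 8 from by norm_num]
      omega
    have hv2 : n.factorization 2 = 6 := by omega
    have hv3u : n.factorization 3 ≤ 6 := by
      by_contra hcon
      refine K3 hc p3 hq hp (by norm_num) hpn h3d hqd hvq (by omega) ?_
      rw [show (3:ℕ)^2*13 = 117 from by norm_num]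
      omega
    have hv3 : n.factorization 3 = 6 := by
      by_contra hcon
      refine K67 hc hq h2d h3d hqd (by norm_num) (by norm_num) hvq 2 1 (by norm_num) ?_
      rw [hv2]
      omega
    refine move hc {2,3,13} (by decide) (2^7*3^4*13^1*29^1) ?_ ?_ ?_
    · intro r hr hrd
      rcases pdvd4 hr p2 p3 p13 p29 hrd with rfl|rfl|rfl|rfl
      · exact Or.inl (by decide)
      · exact Or.inl (by decide)
      · exact Or.inl (by decide)
      · exact Or.inr (fun hdvd => absurd (hmax 29 (by norm_num) hdvd) (by omega))
    · rw [prod_triple _ (by norm_num) (by norm_num) (by norm_num), hv2, hv3, hvq]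
      norm_num
    · rw [prod_triple _ (by norm_num) (by norm_num) (by norm_num), hv2, hv3, hvq, d3c p2 p3 p13 (by norm_num) (by norm_num) (by norm_num), d4c p2 p3 p13 p29 (by norm_num) (by norm_num) (by norm_num) (by norm_num) (by norm_num) (by norm_num)]
      try norm_num
  · exact absurd hq (by norm_num)  -- q = 14
  · exact absurd hq (by norm_num)  -- q = 15
  · exact absurd hq (by norm_num)  -- q = 16

lemma pr_ne_two {n pr : ℕ} (hc : HighlyComposite n) (hbig : 50400 < n) (hpr : pr.Prime)
    (hmax : ∀ q : ℕ, q.Prime → q ∣ n → q ≤ pr) : pr ≠ 2 := by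
  rintro rfl
  have hn0 : n ≠ 0 := hc.1.ne'
  have p2 : Nat.Prime 2 := Nat.prime_two
  have p3 : Nat.Prime 3 := Nat.prime_three
  have hall : ∀ r, r.Prime → r ∣ n → r ∈ ({2} : Finset ℕ) := by
    intro r hr hrd
    have hle := hmax r hr hrd
    have h2le := hr.two_le
    interval_cases r
    · decide
  obtain ⟨a2, ha2⟩ : ∃ a, n.factorization 2 = a := ⟨_, rfl⟩
  have hpin : n = 2^a2 := by
    have hh := pin hn0 {2} (by decide) hall
    rwa [prod_single, ha2] at hh
  have hbig2 : 16 ≤ a2 := by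
    by_contra hcon
    have hle : n ≤ 2^15 := by
      rw [hpin]
      exact Nat.pow_le_pow_right (by norm_num) (by omega)
    norm_num at hle
    omega
  apply move hc {2} (by decide) (2^(a2-2)*3^1)
  · intro r hr hrd
    rcases pdvd2 hr p2 p3 hrd with rfl | rfl
    · exact Or.inl (by decide)
    · exact Or.inr (fun hdvd => absurd (hmax 3 p3 hdvd) (by omega))
  · rw [prod_single, ha2]
    have hsplit : (2:ℕ)^a2 = 2^(a2-2)*2^2 := by rw [← pow_add]; congr 1; omega
    rw [hsplit]
    refine (Nat.mul_lt_mul_left (pow_pos (by norm_num) _)).mpr (by norm_num)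
  · rw [prod_single, ha2, d2c p2 p3 (by norm_num), d_pp p2]
    omega

set_option maxHeartbeats 1000000 in
theorem stmt_3' (n : ℕ) (hn : HighlyComposite n) (hbig : 50400 < n)
    (pr : ℕ) (hpr : pr.Prime) (hprdvd : pr ∣ n)
    (hmax : ∀ q : ℕ, q.Prime → q ∣ n → q ≤ pr) :
    Nat.primeCounting (pr + 1) - Nat.primeCounting ((pr + 1) / 2) ≤
      (d n).factorization 2 := by
  have hn0 : n ≠ 0 := hn.1.ne'
  have hpr3 : 3 ≤ pr := by
    have h2 := hpr.two_le
    have hne := pr_ne_two hn hbig hpr hmax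
    omega
  set a := (pr + 1) / 2 with ha
  set T := (Finset.Ioc a (pr+1)).filter Nat.Prime with hT
  -- membership facts
  have hTmem : ∀ x ∈ T, x.Prime ∧ pr + 1 < 2*x ∧ x ≤ pr := by
    intro x hx
    rw [hT, Finset.mem_filter, Finset.mem_Ioc] at hx
    obtain ⟨⟨hx1, hx2⟩, hxp⟩ := hx
    have hlt : pr + 1 < 2*x := by omega
    refine ⟨hxp, hlt, ?_⟩
    rcases Nat.lt_or_ge x (pr+1) with h | h
    · omega
    · exfalso
      have hxe : x = pr + 1 := by omega
      have hodd : Odd pr := hpr.odd_of_ne_two (by omega)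
      have heven : Even x := by rcases hodd with ⟨k, hk⟩; exact ⟨k+1, by omega⟩
      have hx2' : x = 2 := (Nat.Prime.even_iff hxp).mp heven
      omega
  have hTsub : T ⊆ n.primeFactors := by
    intro x hx
    obtain ⟨hxp, hlt, hle⟩ := hTmem x hx
    exact Nat.mem_primeFactors.mpr ⟨hxp, primes_dvd hn hpr hprdvd x hxp hle, hn0⟩
  -- counting bound
  have hcount : Nat.primeCounting (pr+1) ≤ Nat.primeCounting a + T.card := by
    rw [Nat.primeCounting, Nat.primeCounting, Nat.primeCounting',
      Nat.count_eq_card_filter_range, Nat.count_eq_card_filter_range]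
    have hsplit : Finset.range (pr+2) = Finset.range (a+1) ∪ Finset.Ioc a (pr+1) := by
      rw [Finset.range_eq_Ico]
      rw [← Finset.Ico_union_Ico_eq_Ico (Nat.zero_le (a+1)) (by omega : a+1 ≤ pr+2)]
      congr 1
      · rw [Finset.range_eq_Ico]
      ext x
      simp only [Finset.mem_Ico, Finset.mem_Ioc]
      omega
    rw [hsplit, Finset.filter_union]
    exact le_trans (Finset.card_union_le _ _) (le_refl _)
  -- sum bound
  have hdn : d n = ∏ p ∈ n.primeFactors, (n.factorization p + 1) := by
    rw [d, Nat.card_divisors hn0]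
  have hfac : (d n).factorization 2 = ∑ p ∈ n.primeFactors, (n.factorization p + 1).factorization 2 := by
    rw [hdn, Nat.factorization_prod (fun p _ => Nat.succ_ne_zero _)]
    simp
  have hsum : T.card ≤ (d n).factorization 2 := by
    calc T.card = ∑ _p ∈ T, 1 := by simp
      _ ≤ ∑ p ∈ T, (n.factorization p + 1).factorization 2 := by
          apply Finset.sum_le_sum
          intro x hx
          obtain ⟨hxp, hlt, hle⟩ := hTmem x hx
          have hodd : Odd (n.factorization x) :=
            odd_exp hn hbig hpr hprdvd hmax hpr3 hxp hlt hle
          have hdvd : 2 ∣ (n.factorization x + 1) := by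
            rcases hodd with ⟨k, hk⟩; omega
          exact Nat.Prime.factorization_pos_of_dvd Nat.prime_two (Nat.succ_ne_zero _) hdvd
      _ ≤ ∑ p ∈ n.primeFactors, (n.factorization p + 1).factorization 2 :=
          Finset.sum_le_sum_of_subset hTsub
      _ = (d n).factorization 2 := hfac.symm
  omega

/-- For highly composite n > 50400 with largest prime factor p_r, the
exponent of 2 in d(n) is at least π(p_r+1) − π((p_r+1)/2). -/
theorem stmt_3 (n : ℕ) (hn : HighlyComposite n) (hbig : 50400 < n)
    (pr : ℕ) (hpr : pr.Prime) (hprdvd : pr ∣ n)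
    (hmax : ∀ q : ℕ, q.Prime → q ∣ n → q ≤ pr) :
    Nat.primeCounting (pr + 1) - Nat.primeCounting ((pr + 1) / 2) ≤
      (d n).factorization 2 := by
  exact stmt_3' n hn hbig pr hpr hprdvd hmax
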